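/- arXiv:1405.0780 — 15 statements merged into one kernel-verified Lean document; each statement's English description precedes it below -/
import Mathlib

section
/- If z₀ ∈ ℂ satisfies Re(z₀) > 0, or Re(z₀) = 0 and Im(z₀) ≥ 0, then L_p(z₀) = 1; otherwise L_p(z₀) = -1, where L_p is the Laguerre iteration function for p(z) = z² - 1. In particular, Laguerre's method applied to z² - 1 converges in one iteration from any nonzero complex starting point. -/
open Complex Real Filter

/-- Laguerre iteration function for `p_n(z) = z^n - 1`, using the principal square root. -/
noncomputable def Lp (n : ℕ) (z : ℂ) : ℂ :=
  z * (((z ^ n) ^ ((1 : ℂ) / 2))⁻¹ + ((n : ℂ) - 1)) / ((z ^ n) ^ ((1 : ℂ) / 2) + ((n : ℂ) - 1))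

theorem stmt0 (z₀ : ℂ) (hz : z₀ ≠ 0) :
    (0 < z₀.re ∨ (z₀.re = 0 ∧ 0 ≤ z₀.im) → Lp 2 z₀ = 1) ∧
    (¬(0 < z₀.re ∨ (z₀.re = 0 ∧ 0 ≤ z₀.im)) → Lp 2 z₀ = -1) := by
  have h2 : ((1 : ℂ) / 2) = ((2 : ℕ) : ℂ)⁻¹ := by norm_num
  constructor
  · intro h
    have hlt : -(π / (2 : ℕ)) < z₀.arg := by
      push_cast
      rw [Complex.neg_pi_div_two_lt_arg_iff]
      rcases h with h | ⟨h1, h2⟩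
      · exact Or.inl h
      · exact Or.inr h2
    have hle : z₀.arg ≤ π / (2 : ℕ) := by
      push_cast
      rw [Complex.arg_le_pi_div_two_iff]
      rcases h with h | ⟨h1, _⟩
      · exact Or.inl h.le
      · exact Or.inl h1.ge
    have hsqrt : (z₀ ^ 2) ^ ((1 : ℂ) / 2) = z₀ := by
      rw [h2]
      exact Complex.pow_cpow_nat_inv two_ne_zero hlt hle
    have hne : z₀ + 1 ≠ 0 := by
      intro hc
      have he : z₀ = -1 := by linear_combination hc
      rcases h with h | ⟨h1, _⟩
      · rw [he] at h; norm_num at h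
      · rw [he] at h1; norm_num at h1
    simp only [Lp, hsqrt]
    norm_num
    rw [mul_add, mul_inv_cancel₀ hz, mul_one, div_eq_one_iff_eq hne]
    ring
  · intro h
    push_neg at h
    obtain ⟨h1, h2'⟩ := h
    have hre : z₀.re ≤ 0 := h1
    have hlt : -(π / (2 : ℕ)) < (-z₀).arg := by
      push_cast
      rw [Complex.neg_pi_div_two_lt_arg_iff]
      rcases lt_or_eq_of_le hre with h | h
      · left; simpa using h
      · right
        have := h2' h
        simpa using this.le
    have hle : (-z₀).arg ≤ π / (2 : ℕ) := by
      push_cast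
      rw [Complex.arg_le_pi_div_two_iff]
      rcases lt_or_eq_of_le hre with h | h
      · left; simpa using h.le
      · left; simp [h]
    have hsqrt : (z₀ ^ 2) ^ ((1 : ℂ) / 2) = -z₀ := by
      have : z₀ ^ 2 = (-z₀) ^ 2 := by ring
      rw [this, h2]
      exact Complex.pow_cpow_nat_inv two_ne_zero hlt hle
    have hne : -z₀ + 1 ≠ 0 := by
      intro hc
      have : z₀ = 1 := by linear_combination -hc
      rw [this] at hre
      norm_num at hre
    simp only [Lp, hsqrt]
    norm_num
    rw [div_eq_iff hne, mul_add, mul_one, mul_neg, mul_inv_cancel₀ hz]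
    ring
end

section
/- For n ≥ 2 and z ∈ ℂ nonzero with arg(z) ≠ (2k+1)π/n for all integers k, the Laguerre iteration function commutes with complex conjugation: L_p(z̄) = conj(L_p(z)). -/
open Complex Real Filter

theorem stmt3 (n : ℕ) (hn : 2 ≤ n) (z : ℂ) (hz : z ≠ 0)
    (harg : ∀ k : ℤ, Complex.arg z ≠ (2 * k + 1) * Real.pi / n) :
    Lp n (starRingEnd ℂ z) = starRingEnd ℂ (Lp n z) := by
  have hn0 : (n : ℝ) ≠ 0 := by positivity
  have hargn : (z ^ n).arg ≠ π := by
    intro hpi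
    set θ := z.arg with hθ
    have hz' : (↑‖z‖ : ℂ) * Complex.exp (θ * I) = z :=
      Complex.norm_mul_exp_arg_mul_I z
    have hzn : z ^ n = ((‖z‖ ^ n : ℝ) : ℂ) * Complex.exp (((n * θ : ℝ)) * I) := by
      conv_lhs => rw [← hz']
      rw [mul_pow, ← Complex.exp_nat_mul]
      push_cast
      ring_nf
    have hpos : (0:ℝ) < ‖z‖ ^ n := pow_pos (norm_pos_iff.mpr hz) n
    have harg2 : (Complex.exp (((n * θ : ℝ)) * I)).arg = π := by
      have h := Complex.arg_real_mul (Complex.exp (((n * θ : ℝ)) * I)) hpos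
      rw [← hzn] at h
      rw [← h, hpi]
    have hexp : Complex.exp (((n * θ : ℝ)) * I) = -1 := by
      have h := (Complex.norm_mul_exp_arg_mul_I (Complex.exp (((n * θ : ℝ)) * I))).symm
      rw [harg2, Complex.norm_exp_ofReal_mul_I] at h
      simpa [Complex.exp_pi_mul_I] using h
    have hexp1 : Complex.exp (((n * θ + π : ℝ)) * I) = 1 := by
      rw [Complex.ofReal_add, add_mul, Complex.exp_add, hexp, Complex.exp_pi_mul_I]
      ring
    obtain ⟨k, hk⟩ := Complex.exp_eq_one_iff.mp hexp1
    have hr : (n : ℝ) * θ + π = k * (2 * π) := by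
      have h2 : (((n : ℝ) * θ + π : ℝ) : ℂ) = (((k : ℝ) * (2 * π) : ℝ) : ℂ) := by
        apply mul_right_cancel₀ Complex.I_ne_zero
        push_cast at hk ⊢
        linear_combination hk
      exact_mod_cast h2
    have : θ = (2 * (k - 1 : ℤ) + 1) * π / n := by
      push_cast
      field_simp
      linarith
    exact harg (k - 1) (by rw [hθ] at this; exact this)
  have key : ((starRingEnd ℂ z) ^ n) ^ ((1:ℂ)/2) = starRingEnd ℂ ((z ^ n) ^ ((1:ℂ)/2)) := by
    rw [← map_pow]
    have h := Complex.conj_cpow (z ^ n) ((1:ℂ)/2) hargn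
    simpa [map_ofNat] using h
  simp only [Lp, key, map_div₀, map_mul, map_add, map_inv₀, map_sub, map_natCast, map_one]
end

section
/- For n ≥ 2 and all nonzero z ∈ ℂ, the Laguerre iteration function commutes with inversion in the unit circle: L_p(1/z̄) = 1/conj(L_p(z)). -/
open Complex Real Filter

/-- Key: principal sqrt of `(conj w)⁻¹` equals `(conj (sqrt w))⁻¹`. -/
lemma key_sqrt (w : ℂ) :
    ((starRingEnd ℂ w)⁻¹) ^ ((1 : ℂ) / 2) =
      (starRingEnd ℂ (w ^ ((1 : ℂ) / 2)))⁻¹ := by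
  have hconj_half : starRingEnd ℂ ((1 : ℂ)/2) = (1 : ℂ)/2 :=
    Complex.conj_eq_iff_im.mpr (by norm_num)
  rw [Complex.inv_cpow_eq_ite]
  split_ifs with h
  · -- arg (conj w) = π, so conj w is real negative, hence w = conj w
    have hw : starRingEnd ℂ w = w := by
      have h2 := Complex.arg_eq_pi_iff.mp h
      have : (starRingEnd ℂ w).im = 0 := h2.2
      have him : w.im = 0 := by simpa using this
      exact Complex.conj_eq_iff_im.mpr him
    rw [hconj_half, hw, map_inv₀]
  · -- arg (conj w) ≠ π
    have harg : w.arg ≠ π := by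
      intro hw
      apply h
      rw [Complex.arg_conj, hw]
      simp
    rw [Complex.conj_cpow _ _ harg, hconj_half]

lemma re_sqrt_nonneg (w : ℂ) : 0 ≤ (w ^ ((1 : ℂ) / 2)).re := by
  have : (1 : ℂ)/2 = (2⁻¹ : ℂ) := by norm_num
  rw [this, Complex.cpow_inv_two_re]
  positivity

theorem stmt4 (n : ℕ) (hn : 2 ≤ n) (z : ℂ) (hz : z ≠ 0) :
    Lp n (1 / starRingEnd ℂ z) = 1 / starRingEnd ℂ (Lp n z) := by
  set c := starRingEnd ℂ
  have hcz : c z ≠ 0 := by simp [c, hz]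
  set w : ℂ := z ^ n with hw
  have hwne : w ≠ 0 := pow_ne_zero _ hz
  set s : ℂ := w ^ ((1 : ℂ)/2) with hs
  have hsne : s ≠ 0 := by
    simp [hs, Complex.cpow_eq_zero_iff, hwne]
  -- base rewriting: (1 / c z)^n = (c w)⁻¹
  have hbase : (1 / c z) ^ n = (c w)⁻¹ := by
    rw [one_div, inv_pow, hw]
    simp [c, map_pow]
  have hkey : ((1 / c z) ^ n) ^ ((1 : ℂ)/2) = (c s)⁻¹ := by
    rw [hbase, key_sqrt w]
  have hre_s : 0 ≤ s.re := re_sqrt_nonneg w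
  have hre_cs : 0 ≤ (c s).re := by simpa [c] using hre_s
  have hm : (1 : ℝ) ≤ (n : ℝ) - 1 := by
    have : (2 : ℝ) ≤ (n : ℝ) := by exact_mod_cast hn
    linarith
  have hd1 : c s + ((n : ℂ) - 1) ≠ 0 := by
    intro h0
    have h1 : ((c s) + ((n : ℂ) - 1)).re = 0 := by rw [h0]; simp
    simp [Complex.add_re, Complex.sub_re] at h1
    linarith
  have hd2 : (c s)⁻¹ + ((n : ℂ) - 1) ≠ 0 := by
    have hre : 0 ≤ (c s).re / Complex.normSq (c s) :=
      div_nonneg hre_cs (Complex.normSq_nonneg _)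
    intro h0
    have h1 : (((c s)⁻¹) + ((n : ℂ) - 1)).re = 0 := by rw [h0]; simp
    simp [Complex.add_re, Complex.sub_re] at h1
    linarith
  have hcsne : c s ≠ 0 := by simp [c, hsne]
  -- also need conj of the whole thing
  unfold Lp
  rw [hkey]
  rw [show ((1:ℂ)/ c z) = (c z)⁻¹ by rw [one_div]]
  rw [inv_inv]
  have hconj : c (z * ((z ^ n) ^ ((1:ℂ)/2))⁻¹ + c z * ((n : ℂ) - 1)) = 0 → True := fun _ => trivial
  -- rewrite RHS conj
  have hrhs : c (z * (((z ^ n) ^ ((1:ℂ)/2))⁻¹ + ((n : ℂ) - 1)) / ((z ^ n) ^ ((1:ℂ)/2) + ((n : ℂ) - 1)))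
      = c z * ((c s)⁻¹ + ((n : ℂ) - 1)) / (c s + ((n : ℂ) - 1)) := by
    rw [map_div₀, map_mul, map_add, map_add, map_inv₀]
    simp [c, hs, hw]
  rw [hrhs]
  field_simp
end

section
/- For n ≥ 2, r > 0, and θ ∈ ℝ, the squared modulus of L_p at z = r·e^{iθ} equals |L_p(re^{iθ})|² = (1/r^{n-2}) · (1 + (n-1)²r^n + 2(n-1)|cos(nθ/2)|r^{n/2}) / (r^n + (n-1)² + 2(n-1)|cos(nθ/2)|r^{n/2}). -/
set_option maxHeartbeats 1000000

open Complex Real Filter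

theorem stmt5 (n : ℕ) (hn : 2 ≤ n) (r θ : ℝ) (hr : 0 < r) :
    ‖Lp n ((r : ℂ) * Complex.exp (θ * Complex.I))‖ ^ 2
      = (1 / r ^ ((n : ℝ) - 2)) *
        ((1 + ((n : ℝ) - 1) ^ 2 * r ^ (n : ℝ)
            + 2 * ((n : ℝ) - 1) * |Real.cos ((n : ℝ) * θ / 2)| * r ^ ((n : ℝ) / 2)) /
         (r ^ (n : ℝ) + ((n : ℝ) - 1) ^ 2
            + 2 * ((n : ℝ) - 1) * |Real.cos ((n : ℝ) * θ / 2)| * r ^ ((n : ℝ) / 2))) := by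
  have hn1 : (1:ℝ) ≤ (n:ℝ) := by exact_mod_cast Nat.one_le_of_lt hn
  set z : ℂ := (r : ℂ) * Complex.exp (θ * Complex.I) with hzdef
  have habsz : ‖z‖ = r := by
    rw [hzdef, norm_mul, Complex.norm_exp_ofReal_mul_I, Complex.norm_real, Real.norm_eq_abs,
      abs_of_pos hr, mul_one]
  have hz : z ≠ 0 := by
    intro h; rw [h, norm_zero] at habsz; exact hr.ne' habsz.symm
  have hzn : z ^ n ≠ 0 := pow_ne_zero n hz
  -- z^n = r^n * exp(nθ I)
  have hw : z ^ n = ((r ^ n : ℝ) : ℂ) * Complex.exp ((((n : ℝ) * θ : ℝ)) * Complex.I) := by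
    rw [hzdef, mul_pow, ← Complex.exp_nat_mul]
    push_cast
    ring_nf
  have habsw : ‖z ^ n‖ = r ^ (n : ℝ) := by
    rw [norm_pow, habsz, ← Real.rpow_natCast]
  -- arg (z^n) = nθ + 2kπ
  have hargw : ∃ k : ℤ, Complex.arg (z ^ n) = (n : ℝ) * θ + k * (2 * π) := by
    have h1 : Complex.arg (z ^ n) = Complex.arg (Complex.exp ((((n : ℝ) * θ : ℝ)) * Complex.I)) := by
      rw [hw, Complex.arg_real_mul _ (pow_pos hr n)]
    set u : ℂ := Complex.exp ((((n : ℝ) * θ : ℝ)) * Complex.I) with hu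
    have habsu : ‖u‖ = 1 := Complex.norm_exp_ofReal_mul_I _
    have h2 : Complex.exp ((Complex.arg u : ℂ) * Complex.I) = u := by
      have := Complex.norm_mul_exp_arg_mul_I u
      rwa [habsu, Complex.ofReal_one, one_mul] at this
    rw [hu] at h2
    rw [Complex.exp_eq_exp_iff_exists_int] at h2
    obtain ⟨k, hk⟩ := h2
    refine ⟨k, ?_⟩
    have him := congrArg Complex.im hk
    simp only [Complex.add_im, Complex.mul_im, Complex.ofReal_re, Complex.I_im,
      Complex.ofReal_im, Complex.I_re, mul_zero, mul_one, zero_mul, add_zero,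
      Complex.intCast_im, Complex.intCast_re, Complex.re_ofNat, Complex.im_ofNat,
      Complex.mul_re, zero_add] at him
    rw [h1]
    simp only [hu]
    linarith [him]
  -- cos (arg(z^n)/2) = |cos (nθ/2)|
  have hcos : Real.cos (Complex.arg (z ^ n) / 2) = |Real.cos ((n : ℝ) * θ / 2)| := by
    obtain ⟨k, hk⟩ := hargw
    have hnonneg : 0 ≤ Real.cos (Complex.arg (z ^ n) / 2) := by
      apply Real.cos_nonneg_of_mem_Icc
      constructor
      · linarith [Complex.neg_pi_lt_arg (z ^ n)]
      · linarith [Complex.arg_le_pi (z ^ n)]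
    have h2 : Real.cos (Complex.arg (z ^ n) / 2) = (-1 : ℝ) ^ k * Real.cos ((n : ℝ) * θ / 2) := by
      rw [hk]
      have : ((n : ℝ) * θ + k * (2 * π)) / 2 = (n : ℝ) * θ / 2 + k * π := by ring
      rw [this, Real.cos_add_int_mul_pi]
    rcases Int.even_or_odd k with he | ho
    · rw [he.neg_one_zpow] at h2
      rw [h2] at hnonneg ⊢
      rw [one_mul] at hnonneg ⊢
      exact (_root_.abs_of_nonneg hnonneg).symm
    · rw [Odd.neg_one_zpow ho] at h2
      rw [h2] at hnonneg ⊢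
      rw [neg_one_mul] at hnonneg ⊢
      rw [_root_.abs_of_nonpos (by linarith)]
  -- the square root s
  set s : ℂ := (z ^ n) ^ ((1 : ℂ) / 2) with hs
  set ρ : ℝ := r ^ ((n : ℝ) / 2) with hρ
  set A : ℝ := |Real.cos ((n : ℝ) * θ / 2)| with hA
  set c : ℝ := (n : ℝ) - 1 with hc
  have hcpos : 0 ≤ c := by rw [hc]; linarith
  have hApos : 0 ≤ A := abs_nonneg _
  have hρpos : 0 < ρ := Real.rpow_pos_of_pos hr _
  have habss : ‖s‖ = ρ := by
    rw [hs, Complex.norm_cpow_of_ne_zero hzn]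
    have h1 : ((1:ℂ)/2).re = (1/2 : ℝ) := by norm_num
    have h2 : ((1:ℂ)/2).im = 0 := by norm_num
    rw [h1, h2, mul_zero, Real.exp_zero, div_one, habsw, ← Real.rpow_mul hr.le, hρ]
    congr 1
    ring
  have hnormsq : Complex.normSq s = ρ ^ 2 := by
    rw [← Complex.sq_norm, habss]
  have him2 : s.im ^ 2 = ρ ^ 2 - s.re ^ 2 := by
    have h := hnormsq
    rw [Complex.normSq_apply] at h
    nlinarith [h]
  have hre : s.re = ρ * A := by
    rw [hs, Complex.cpow_def_of_ne_zero hzn, Complex.exp_re]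
    have h1 : (Complex.log (z ^ n) * ((1:ℂ)/2)).re = Real.log (r ^ (n:ℝ)) / 2 := by
      have : ((1:ℂ)/2).re = (1/2 : ℝ) := by norm_num
      have h2 : ((1:ℂ)/2).im = 0 := by norm_num
      rw [Complex.mul_re, this, h2, Complex.log_re, habsw]
      ring
    have h2 : (Complex.log (z ^ n) * ((1:ℂ)/2)).im = Complex.arg (z ^ n) / 2 := by
      have h3 : ((1:ℂ)/2).re = (1/2 : ℝ) := by norm_num
      have h4 : ((1:ℂ)/2).im = 0 := by norm_num
      rw [Complex.mul_im, h3, h4, Complex.log_im, Complex.log_re]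
      ring
    rw [h1, h2, hcos]
    congr 1
    rw [Real.log_rpow hr, hρ, Real.rpow_def_of_pos hr]
    congr 1
    ring
  -- reduce |Lp|^2 to a real expression
  have hcnat : ((n:ℂ) - 1) = ((c : ℝ) : ℂ) := by rw [hc]; push_cast; ring
  have hkey : ‖Lp n z‖ ^ 2
      = r ^ 2 * ((s.re / ρ ^ 2 + c) ^ 2 + s.im ^ 2 / (ρ ^ 2) ^ 2)
          / ((s.re + c) ^ 2 + s.im ^ 2) := by
    have hLp : Lp n z = z * (s⁻¹ + ((n:ℂ) - 1)) / (s + ((n:ℂ) - 1)) := rfl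
    rw [hLp, norm_div, norm_mul, habsz, div_pow, mul_pow]
    congr 1
    · congr 1
      rw [Complex.sq_norm, Complex.normSq_apply, Complex.add_re, Complex.add_im,
        Complex.inv_re, Complex.inv_im, hnormsq, hcnat, Complex.ofReal_re,
        Complex.ofReal_im, add_zero]
      field_simp
    · rw [Complex.sq_norm, Complex.normSq_apply, Complex.add_re, Complex.add_im,
        hcnat, Complex.ofReal_re, Complex.ofReal_im, add_zero]
      ring
  have hρ2 : ρ ^ 2 = r ^ (n : ℝ) := by
    rw [hρ, ← Real.rpow_natCast (r ^ ((n:ℝ)/2)) 2, ← Real.rpow_mul hr.le]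
    norm_num
  have hr2 : 1 / r ^ ((n : ℝ) - 2) = r ^ 2 / ρ ^ 2 := by
    rw [hρ2, Real.rpow_sub hr, one_div_div]
    norm_num
  rw [hkey, hre, hr2, ← hρ2, him2, hre]
  have hden1 : (ρ * A + c) ^ 2 + (ρ ^ 2 - (ρ * A) ^ 2) ≠ 0 := by
    nlinarith [mul_nonneg (mul_nonneg hρpos.le hApos) hcpos, sq_nonneg c, hρpos,
      mul_pos hρpos hρpos]
  have hden2 : ρ ^ 2 + c ^ 2 + 2 * c * A * ρ ≠ 0 := by
    nlinarith [mul_nonneg (mul_nonneg hρpos.le hApos) hcpos, sq_nonneg c, hρpos,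
      mul_pos hρpos hρpos]
  have hden3 : A * ρ * c * 2 + ρ ^ 2 + c ^ 2 ≠ 0 := by
    intro h; apply hden2; linarith
  field_simp [hρpos.ne', hden1, hden2, hden3]
  rw [div_eq_iff (by intro h; apply hden2; linarith)]
  ring
end

section
/- For n ≥ 2 and z on the unit circle (|z| = 1), |L_p(z)| = 1; that is, the unit circle is invariant under the Laguerre iteration function. -/
open Complex Real Filter

theorem stmt6 (n : ℕ) (hn : 2 ≤ n) (z : ℂ) (hz : ‖z‖ = 1) :
    ‖Lp n z‖ = 1 := by
  have hz0 : z ≠ 0 := by intro h; simp [h] at hz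
  have hzn : z ^ n ≠ 0 := pow_ne_zero _ hz0
  set w : ℂ := (z ^ n) ^ ((1 : ℂ) / 2) with hw
  have habsw : ‖w‖ = 1 := by
    rw [hw, Complex.norm_cpow_of_ne_zero hzn]
    simp [norm_pow, hz]
  have hinv : w⁻¹ = starRingEnd ℂ w := by
    rw [Complex.inv_def, Complex.normSq_eq_norm_sq, habsw]
    simp
  have hrew : 0 ≤ w.re := by
    rw [hw, Complex.cpow_def_of_ne_zero hzn, Complex.exp_re]
    have him : (Complex.log (z ^ n) * ((1:ℂ)/2)).im = (z^n).arg / 2 := by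
      simp [Complex.mul_im, Complex.log_im]
      ring
    rw [him]
    have h1 : (z^n).arg / 2 ≤ π/2 := by
      have := Complex.arg_le_pi (z^n); linarith
    have h2 : -(π/2) ≤ (z^n).arg/2 := by
      have := Complex.neg_pi_lt_arg (z^n); linarith
    have hcos := Real.cos_nonneg_of_mem_Icc ⟨h2, h1⟩
    positivity
  have hd : w + ((n:ℂ) - 1) ≠ 0 := by
    intro h
    have hre : (w + ((n:ℂ)-1)).re = 0 := by rw [h]; simp
    simp [Complex.add_re, Complex.sub_re] at hre
    have hn1 : (1:ℝ) ≤ (n:ℝ) - 1 := by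
      have : (2:ℝ) ≤ n := by exact_mod_cast hn
      linarith
    linarith
  have hconj : w⁻¹ + ((n:ℂ)-1) = starRingEnd ℂ (w + ((n:ℂ)-1)) := by
    rw [hinv]; simp
  rw [Lp, ← hw, hconj, norm_div, norm_mul, hz, Complex.norm_conj, one_mul,
    div_self (norm_ne_zero_iff.mpr hd)]
end

section
/- For n ≥ 5 and any θ ∈ ℝ, the function f(r) = f_n(r, θ) has exactly three positive zeros r_D, 1, r_E satisfying r_D < 1 < r_E, and r_E = 1/r_D. -/
open Complex Real Filter

/-- The characteristic function `f_n(r, θ)`. -/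
noncomputable def fchar (n : ℕ) (r θ : ℝ) : ℝ :=
  r ^ (2 * (n : ℝ) - 4)
    + 2 * ((n : ℝ) - 1) * |Real.cos ((n : ℝ) * θ / 2)| * r ^ ((n : ℝ) / 2) * (r ^ ((n : ℝ) - 4) - 1)
    - ((n : ℝ) - 1) ^ 2 * r ^ (n : ℝ)
    + ((n : ℝ) - 1) ^ 2 * r ^ ((n : ℝ) - 4) - 1


open Set

noncomputable def hfun (N B x : ℝ) : ℝ :=
  Real.sinh ((N - 2) * x) + B * Real.sinh ((N - 4) / 2 * x) - (N - 1) ^ 2 * Real.sinh (2 * x)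

/-! ### Key sinh inequalities -/

lemma tcosh_gt_sinh {t : ℝ} (ht : 0 < t) : Real.sinh t < t * Real.cosh t := by
  have hmono : StrictMonoOn (fun t : ℝ => t * Real.cosh t - Real.sinh t) (Ici 0) := by
    apply strictMonoOn_of_deriv_pos (convex_Ici _)
    · exact ((continuous_id.mul Real.continuous_cosh).sub Real.continuous_sinh).continuousOn
    · intro x hx
      rw [interior_Ici, mem_Ioi] at hx
      have h1 : HasDerivAt (fun t : ℝ => t * Real.cosh t - Real.sinh t)
          (1 * Real.cosh x + x * Real.sinh x - Real.cosh x) x :=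
        ((hasDerivAt_id x).mul (Real.hasDerivAt_cosh x)).sub (Real.hasDerivAt_sinh x)
      rw [h1.deriv]
      have := Real.sinh_pos_iff.mpr hx
      nlinarith
  have := hmono (self_mem_Ici) (le_of_lt ht : (0:ℝ) ≤ t) ht
  simpa using this

lemma sinh_div_strictMono : StrictMonoOn (fun t : ℝ => Real.sinh t / t) (Ioi 0) := by
  apply strictMonoOn_of_deriv_pos (convex_Ioi _)
  · exact ContinuousOn.div Real.continuous_sinh.continuousOn continuousOn_id
      (fun x hx => ne_of_gt hx)
  · intro x hx
    rw [interior_Ioi, mem_Ioi] at hx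
    have h1 : HasDerivAt (fun t : ℝ => Real.sinh t / t)
        ((Real.cosh x * x - Real.sinh x * 1) / x ^ 2) x :=
      (Real.hasDerivAt_sinh x).div (hasDerivAt_id x) (ne_of_gt hx)
    rw [h1.deriv]
    have h2 := tcosh_gt_sinh hx
    have : (0:ℝ) < x ^ 2 := by positivity
    apply div_pos ?_ this
    nlinarith

/-- Key lemma: for `0 < q < p` and `x > 0`, `p * sinh (q*x) < q * sinh (p*x)`. -/
lemma key {p q x : ℝ} (hq : 0 < q) (hqp : q < p) (hx : 0 < x) :
    p * Real.sinh (q * x) < q * Real.sinh (p * x) := by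
  have hqx : (0:ℝ) < q * x := by positivity
  have hp : (0:ℝ) < p := hq.trans hqp
  have hpx : (0:ℝ) < p * x := by positivity
  have := sinh_div_strictMono (mem_Ioi.mpr hqx) (mem_Ioi.mpr hpx)
    (by nlinarith : q * x < p * x)
  simp only [] at this
  rw [div_lt_div_iff₀ hqx hpx] at this
  nlinarith

lemma key' {p q x : ℝ} (hq : 0 ≤ q) (hqp : q ≤ p) (hx : 0 < x) :
    p * Real.sinh (q * x) ≤ q * Real.sinh (p * x) := by
  rcases eq_or_lt_of_le hq with h | h
  · simp [← h]
  rcases eq_or_lt_of_le hqp with h2 | h2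
  · subst h2; rfl
  exact (key h h2 hx).le

/-! ### product-to-sum -/

lemma cs' (a b s d : ℝ) (hs : a + b = s) (hd : a - b = d) :
    Real.cosh a * Real.sinh b = (Real.sinh s - Real.sinh d) / 2 := by
  rw [← hs, ← hd, Real.sinh_add, Real.sinh_sub]; ring

lemma cs2 (a b s d : ℝ) (hs : a + b = s) (hd : b - a = d) :
    Real.cosh a * Real.sinh b = (Real.sinh s + Real.sinh d) / 2 := by
  rw [← hs, ← hd, Real.sinh_add, Real.sinh_sub]; ring

lemma sc' (a b s d : ℝ) (hs : a + b = s) (hd : a - b = d) :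
    Real.sinh a * Real.cosh b = (Real.sinh s + Real.sinh d) / 2 := by
  rw [← hs, ← hd, Real.sinh_add, Real.sinh_sub]; ring

lemma sc2 (a b s d : ℝ) (hs : a + b = s) (hd : b - a = d) :
    Real.sinh a * Real.cosh b = (Real.sinh s - Real.sinh d) / 2 := by
  rw [← hs, ← hd, Real.sinh_add, Real.sinh_sub]; ring

/-! ### derivative machinery -/

lemma hasDerivAt_sinh_mul (a x : ℝ) :
    HasDerivAt (fun y => Real.sinh (a * y)) (Real.cosh (a * x) * a) x := by
  have h := (Real.hasDerivAt_sinh (a * x)).comp x ((hasDerivAt_id x).const_mul a)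
  rw [mul_one] at h
  exact h

lemma hfun_hasDeriv (N B x : ℝ) :
    HasDerivAt (hfun N B)
      (Real.cosh ((N - 2) * x) * (N - 2) + B * (Real.cosh ((N - 4) / 2 * x) * ((N - 4) / 2))
        - (N - 1) ^ 2 * (Real.cosh (2 * x) * 2)) x := by
  unfold hfun
  exact ((hasDerivAt_sinh_mul (N - 2) x).add
      (((hasDerivAt_sinh_mul ((N - 4) / 2) x)).const_mul B)).sub
    ((hasDerivAt_sinh_mul 2 x).const_mul ((N - 1) ^ 2))

lemma uniq_aux (N B κ : ℝ) (hκ : 0 < κ)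
    (hpos : ∀ x : ℝ, 0 < x →
      0 < (Real.cosh ((N - 2) * x) * (N - 2) + B * (Real.cosh ((N - 4) / 2 * x) * ((N - 4) / 2))
            - (N - 1) ^ 2 * (Real.cosh (2 * x) * 2)) * Real.sinh (κ * x)
          - hfun N B x * (Real.cosh (κ * x) * κ)) :
    ∀ x y : ℝ, 0 < x → 0 < y → hfun N B x = 0 → hfun N B y = 0 → x = y := by
  have hmono : StrictMonoOn (fun x => hfun N B x / Real.sinh (κ * x)) (Ioi 0) := by
    apply strictMonoOn_of_deriv_pos (convex_Ioi _)
    · apply ContinuousOn.div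
      · unfold hfun
        fun_prop
      · fun_prop
      · intro x hx
        have : 0 < κ * x := mul_pos hκ hx
        exact Real.sinh_ne_zero.mpr (ne_of_gt this)
    · intro x hx
      rw [interior_Ioi, mem_Ioi] at hx
      have hsz : Real.sinh (κ * x) ≠ 0 := by
        have : 0 < κ * x := mul_pos hκ hx
        exact Real.sinh_ne_zero.mpr (ne_of_gt this)
      have hd : HasDerivAt (fun x => hfun N B x / Real.sinh (κ * x))
          (((Real.cosh ((N - 2) * x) * (N - 2) + B * (Real.cosh ((N - 4) / 2 * x) * ((N - 4) / 2))
            - (N - 1) ^ 2 * (Real.cosh (2 * x) * 2)) * Real.sinh (κ * x)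
          - hfun N B x * (Real.cosh (κ * x) * κ)) / (Real.sinh (κ * x)) ^ 2) x :=
        (hfun_hasDeriv N B x).div (hasDerivAt_sinh_mul κ x) hsz
      rw [hd.deriv]
      exact div_pos (hpos x hx) (by positivity)
  intro x y hx hy hfx hfy
  exact hmono.injOn (mem_Ioi.mpr hx) (mem_Ioi.mpr hy) (by simp [hfx, hfy])

/-! ### numerator positivity -/

lemma pos8 (N B x : ℝ) (hN : 8 ≤ N) (hB0 : 0 ≤ B) (hx : 0 < x) :
    0 < (Real.cosh ((N - 2) * x) * (N - 2) + B * (Real.cosh ((N - 4) / 2 * x) * ((N - 4) / 2))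
          - (N - 1) ^ 2 * (Real.cosh (2 * x) * 2)) * Real.sinh (2 * x)
        - hfun N B x * (Real.cosh (2 * x) * 2) := by
  have c1 := cs' ((N-2)*x) (2*x) (N*x) ((N-4)*x) (by ring) (by ring)
  have c2 := cs' ((N-4)/2*x) (2*x) (N/2*x) ((N-8)/2*x) (by ring) (by ring)
  have s1 := sc' ((N-2)*x) (2*x) (N*x) ((N-4)*x) (by ring) (by ring)
  have s2 := sc' ((N-4)/2*x) (2*x) (N/2*x) ((N-8)/2*x) (by ring) (by ring)
  have hE : (Real.cosh ((N - 2) * x) * (N - 2) + B * (Real.cosh ((N - 4) / 2 * x) * ((N - 4) / 2))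
          - (N - 1) ^ 2 * (Real.cosh (2 * x) * 2)) * Real.sinh (2 * x)
        - hfun N B x * (Real.cosh (2 * x) * 2)
      = ((N-4) * Real.sinh (N*x) - N * Real.sinh ((N-4)*x)) / 2
        + B * ((N-8)/2 * Real.sinh (N/2*x) - N/2 * Real.sinh ((N-8)/2*x)) / 2 := by
    unfold hfun
    linear_combination (N-2) * c1 + (B*(N-4)/2) * c2 - 2 * s1 - 2*B * s2
  rw [hE]
  have k1 : N * Real.sinh ((N-4)*x) < (N-4) * Real.sinh (N*x) :=
    key (by linarith) (by linarith) hx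
  have k2 : N/2 * Real.sinh ((N-8)/2*x) ≤ (N-8)/2 * Real.sinh (N/2*x) :=
    key' (by linarith) (by linarith) hx
  have hbr : 0 ≤ (N-8)/2 * Real.sinh (N/2*x) - N/2 * Real.sinh ((N-8)/2*x) := by linarith
  have hBb := mul_nonneg hB0 hbr
  linarith

lemma pos5 (B x : ℝ) (hB0 : 0 ≤ B) (hB1 : B ≤ 8) (hx : 0 < x) :
    0 < (Real.cosh (((5:ℝ) - 2) * x) * ((5:ℝ) - 2)
          + B * (Real.cosh (((5:ℝ) - 4) / 2 * x) * (((5:ℝ) - 4) / 2))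
          - ((5:ℝ) - 1) ^ 2 * (Real.cosh (2 * x) * 2)) * Real.sinh (((5:ℝ) - 2) * x)
        - hfun 5 B x * (Real.cosh (((5:ℝ) - 2) * x) * ((5:ℝ) - 2)) := by
  have c1 := cs2 (((5:ℝ)-4)/2*x) (((5:ℝ)-2)*x) (7/2*x) (5/2*x) (by ring) (by ring)
  have s1 := sc2 (((5:ℝ)-4)/2*x) (((5:ℝ)-2)*x) (7/2*x) (5/2*x) (by ring) (by ring)
  have c3 := cs2 (2*x) (((5:ℝ)-2)*x) (5*x) (x) (by ring) (by ring)
  have s3 := sc2 (2*x) (((5:ℝ)-2)*x) (5*x) (x) (by ring) (by ring)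
  have hE : (Real.cosh (((5:ℝ) - 2) * x) * ((5:ℝ) - 2)
          + B * (Real.cosh (((5:ℝ) - 4) / 2 * x) * (((5:ℝ) - 4) / 2))
          - ((5:ℝ) - 1) ^ 2 * (Real.cosh (2 * x) * 2)) * Real.sinh (((5:ℝ) - 2) * x)
        - hfun 5 B x * (Real.cosh (((5:ℝ) - 2) * x) * ((5:ℝ) - 2))
      = 8 * Real.sinh (5*x) - 40 * Real.sinh x
        - B * (5/4 * Real.sinh (7/2*x) - 7/4 * Real.sinh (5/2*x)) := by
    unfold hfun
    linear_combination (B/2) * c1 - 3*B * s1 - 32 * c3 + 48 * s3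
  rw [hE]
  have k0 : (5:ℝ) * Real.sinh (7/2*x) < 7/2 * Real.sinh (5*x) :=
    key (by norm_num) (by norm_num) hx
  have k3 : (7:ℝ)/2 * Real.sinh (5/2*x) < 5/2 * Real.sinh (7/2*x) :=
    key (by norm_num) (by norm_num) hx
  have k1 : (5:ℝ) * Real.sinh (1*x) < 1 * Real.sinh (5*x) :=
    key (by norm_num) (by norm_num) hx
  have k2 : (5:ℝ)/2 * Real.sinh (1*x) < 1 * Real.sinh (5/2*x) :=
    key (by norm_num) (by norm_num) hx
  rw [one_mul] at k1 k2
  have hbr : 0 ≤ 5/4 * Real.sinh (7/2*x) - 7/4 * Real.sinh (5/2*x) := by linarith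
  have hBb := mul_le_mul_of_nonneg_right hB1 hbr
  have hsx : 0 < Real.sinh x := Real.sinh_pos_iff.mpr hx
  linarith

lemma pos6 (B x : ℝ) (hB0 : 0 ≤ B) (hB1 : B ≤ 10) (hx : 0 < x) :
    0 < (Real.cosh (((6:ℝ) - 2) * x) * ((6:ℝ) - 2)
          + B * (Real.cosh (((6:ℝ) - 4) / 2 * x) * (((6:ℝ) - 4) / 2))
          - ((6:ℝ) - 1) ^ 2 * (Real.cosh (2 * x) * 2)) * Real.sinh (((6:ℝ) - 2) * x)
        - hfun 6 B x * (Real.cosh (((6:ℝ) - 2) * x) * ((6:ℝ) - 2)) := by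
  have c1 := cs2 (((6:ℝ)-4)/2*x) (((6:ℝ)-2)*x) (5*x) (3*x) (by ring) (by ring)
  have s1 := sc2 (((6:ℝ)-4)/2*x) (((6:ℝ)-2)*x) (5*x) (3*x) (by ring) (by ring)
  have c3 := cs2 (2*x) (((6:ℝ)-2)*x) (6*x) (2*x) (by ring) (by ring)
  have s3 := sc2 (2*x) (((6:ℝ)-2)*x) (6*x) (2*x) (by ring) (by ring)
  have hE : (Real.cosh (((6:ℝ) - 2) * x) * ((6:ℝ) - 2)
          + B * (Real.cosh (((6:ℝ) - 4) / 2 * x) * (((6:ℝ) - 4) / 2))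
          - ((6:ℝ) - 1) ^ 2 * (Real.cosh (2 * x) * 2)) * Real.sinh (((6:ℝ) - 2) * x)
        - hfun 6 B x * (Real.cosh (((6:ℝ) - 2) * x) * ((6:ℝ) - 2))
      = 25 * Real.sinh (6*x) - 75 * Real.sinh (2*x)
        - B * (3/2 * Real.sinh (5*x) - 5/2 * Real.sinh (3*x)) := by
    unfold hfun
    linear_combination B * c1 - 4*B * s1 - 50 * c3 + 100 * s3
  rw [hE]
  have k0 : (6:ℝ) * Real.sinh (5*x) < 5 * Real.sinh (6*x) :=
    key (by norm_num) (by norm_num) hx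
  have k3 : (5:ℝ) * Real.sinh (3*x) < 3 * Real.sinh (5*x) :=
    key (by norm_num) (by norm_num) hx
  have k1 : (6:ℝ) * Real.sinh (2*x) < 2 * Real.sinh (6*x) :=
    key (by norm_num) (by norm_num) hx
  have k2 : (3:ℝ) * Real.sinh (2*x) < 2 * Real.sinh (3*x) :=
    key (by norm_num) (by norm_num) hx
  have hbr : 0 ≤ 3/2 * Real.sinh (5*x) - 5/2 * Real.sinh (3*x) := by linarith
  have hBb := mul_le_mul_of_nonneg_right hB1 hbr
  have hsx : 0 < Real.sinh (2*x) := Real.sinh_pos_iff.mpr (by linarith)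
  linarith

lemma pos7 (B x : ℝ) (hB0 : 0 ≤ B) (hB1 : B ≤ 12) (hx : 0 < x) :
    0 < (Real.cosh (((7:ℝ) - 2) * x) * ((7:ℝ) - 2)
          + B * (Real.cosh (((7:ℝ) - 4) / 2 * x) * (((7:ℝ) - 4) / 2))
          - ((7:ℝ) - 1) ^ 2 * (Real.cosh (2 * x) * 2)) * Real.sinh (((7:ℝ) - 2) * x)
        - hfun 7 B x * (Real.cosh (((7:ℝ) - 2) * x) * ((7:ℝ) - 2)) := by
  have c1 := cs2 (((7:ℝ)-4)/2*x) (((7:ℝ)-2)*x) (13/2*x) (7/2*x) (by ring) (by ring)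
  have s1 := sc2 (((7:ℝ)-4)/2*x) (((7:ℝ)-2)*x) (13/2*x) (7/2*x) (by ring) (by ring)
  have c3 := cs2 (2*x) (((7:ℝ)-2)*x) (7*x) (3*x) (by ring) (by ring)
  have s3 := sc2 (2*x) (((7:ℝ)-2)*x) (7*x) (3*x) (by ring) (by ring)
  have hE : (Real.cosh (((7:ℝ) - 2) * x) * ((7:ℝ) - 2)
          + B * (Real.cosh (((7:ℝ) - 4) / 2 * x) * (((7:ℝ) - 4) / 2))
          - ((7:ℝ) - 1) ^ 2 * (Real.cosh (2 * x) * 2)) * Real.sinh (((7:ℝ) - 2) * x)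
        - hfun 7 B x * (Real.cosh (((7:ℝ) - 2) * x) * ((7:ℝ) - 2))
      = 54 * Real.sinh (7*x) - 126 * Real.sinh (3*x)
        - B * (7/4 * Real.sinh (13/2*x) - 13/4 * Real.sinh (7/2*x)) := by
    unfold hfun
    linear_combination (3*B/2) * c1 - 5*B * s1 - 72 * c3 + 180 * s3
  rw [hE]
  have k0 : (7:ℝ) * Real.sinh (13/2*x) < 13/2 * Real.sinh (7*x) :=
    key (by norm_num) (by norm_num) hx
  have k3 : (13:ℝ)/2 * Real.sinh (7/2*x) < 7/2 * Real.sinh (13/2*x) :=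
    key (by norm_num) (by norm_num) hx
  have k1 : (7:ℝ) * Real.sinh (3*x) < 3 * Real.sinh (7*x) :=
    key (by norm_num) (by norm_num) hx
  have k2 : (7:ℝ)/2 * Real.sinh (3*x) < 3 * Real.sinh (7/2*x) :=
    key (by norm_num) (by norm_num) hx
  have hbr : 0 ≤ 7/4 * Real.sinh (13/2*x) - 13/4 * Real.sinh (7/2*x) := by linarith
  have hBb := mul_le_mul_of_nonneg_right hB1 hbr
  have hsx : 0 < Real.sinh (3*x) := Real.sinh_pos_iff.mpr (by linarith)
  linarith


lemma hfun_odd (N B x : ℝ) : hfun N B (-x) = -hfun N B x := by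
  simp only [hfun, mul_neg, Real.sinh_neg]; ring

lemma hfun_zero (N B : ℝ) : hfun N B 0 = 0 := by simp [hfun]

lemma hfun_cont (N B : ℝ) : Continuous (hfun N B) := by unfold hfun; fun_prop

lemma sinh_one_lt_two : Real.sinh 1 < 2 := by
  rw [Real.sinh_eq]
  have h := Real.exp_one_lt_d9
  have h2 := Real.exp_pos (-1)
  nlinarith

lemma hfun_neg_pt (N B : ℝ) (hN : 5 ≤ N) (hB0 : 0 ≤ B) (hB1 : B ≤ 2 * (N - 1)) :
    hfun N B (1 / (N - 2)) < 0 := by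
  have hN2 : (0:ℝ) < N - 2 := by linarith
  set x1 : ℝ := 1 / (N - 2) with hx1def
  have hx1 : 0 < x1 := by positivity
  have e1 : (N - 2) * x1 = 1 := by rw [hx1def]; field_simp
  have hu0 : 0 ≤ Real.sinh ((N - 4) / 2 * x1) := Real.sinh_nonneg_iff.mpr (mul_nonneg (by linarith) hx1.le)
  have k' : (N - 2) * Real.sinh ((N - 4) / 2 * x1) ≤ (N - 4) / 2 * Real.sinh ((N - 2) * x1) :=
    key' (by linarith) (by linarith) hx1
  rw [e1] at k'
  have kc : 2 * x1 ≤ Real.sinh (2 * x1) := Real.self_le_sinh_iff.mpr (by linarith)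
  have hs2 := sinh_one_lt_two
  have hs1 : 0 < Real.sinh 1 := Real.sinh_pos_iff.mpr one_pos
  unfold hfun
  rw [e1]
  by_contra hcon
  push_neg at hcon
  have hBu : B * Real.sinh ((N - 4) / 2 * x1) ≤ 2 * (N - 1) * Real.sinh ((N - 4) / 2 * x1) :=
    mul_le_mul_of_nonneg_right hB1 hu0
  have A2 : (2 * (N - 1)) * ((N - 2) * Real.sinh ((N - 4) / 2 * x1))
      ≤ (2 * (N - 1)) * ((N - 4) / 2 * Real.sinh 1) :=
    mul_le_mul_of_nonneg_left k' (by linarith)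
  have A3 : (N - 1) ^ 2 * (2 * x1) ≤ (N - 1) ^ 2 * Real.sinh (2 * x1) :=
    mul_le_mul_of_nonneg_left kc (by positivity)
  have A5 : (N - 2) * ((N - 1) ^ 2 * (2 * x1)) ≤ (N - 2) * ((N - 1) ^ 2 * Real.sinh (2 * x1)) :=
    mul_le_mul_of_nonneg_left A3 hN2.le
  have A4 : (N - 2) * ((N - 1) ^ 2 * (2 * x1)) = 2 * (N - 1) ^ 2 := by
    linear_combination ((N - 1) ^ 2 * 2) * e1
  have hcon' : 0 ≤ (N - 2) * (Real.sinh 1 + B * Real.sinh ((N - 4) / 2 * x1)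
      - (N - 1) ^ 2 * Real.sinh (2 * x1)) := mul_nonneg hN2.le hcon
  have hBu' : (N - 2) * (B * Real.sinh ((N - 4) / 2 * x1))
      ≤ (N - 2) * (2 * (N - 1) * Real.sinh ((N - 4) / 2 * x1)) :=
    mul_le_mul_of_nonneg_left hBu hN2.le
  have A6 : (N ^ 2 - 4 * N + 2) * Real.sinh 1 ≤ (N ^ 2 - 4 * N + 2) * 2 :=
    mul_le_mul_of_nonneg_left hs2.le (by nlinarith)
  nlinarith [hcon', hBu', A2, A4, A5, A6]

lemma hfun_pos_pt (N B : ℝ) (hN : 5 ≤ N) (hB0 : 0 ≤ B) :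
    0 < hfun N B (Real.log (N ^ 2 + 2)) := by
  have hNN : (0:ℝ) < N ^ 2 + 2 := by positivity
  set x2 : ℝ := Real.log (N ^ 2 + 2) with hx2def
  have hx2e : Real.exp x2 = N ^ 2 + 2 := Real.exp_log hNN
  have hx2pos : 0 < x2 := Real.log_pos (by nlinarith)
  set W : ℝ := Real.exp ((N - 3) * x2) with hWdef
  have hW1 : 1 ≤ W := by
    rw [hWdef, ← Real.exp_zero]
    exact Real.exp_le_exp.mpr (mul_nonneg (by linarith) hx2pos.le)
  have bound1 : (W * (N ^ 2 + 2) - 1) / 2 ≤ Real.sinh ((N - 2) * x2) := by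
    rw [Real.sinh_eq]
    have hsplit : Real.exp ((N - 2) * x2) = W * (N ^ 2 + 2) := by
      rw [hWdef, ← hx2e, ← Real.exp_add]; ring_nf
    have hle1 : Real.exp (-((N - 2) * x2)) ≤ 1 := Real.exp_le_one_iff.mpr
      (by nlinarith [mul_nonneg (show (0:ℝ) ≤ N - 2 by linarith) hx2pos.le])
    rw [hsplit]
    linarith
  have bound2 : Real.sinh (2 * x2) ≤ W / 2 := by
    rw [Real.sinh_eq]
    have h1 : Real.exp (2 * x2) ≤ W := Real.exp_le_exp.mpr
      (by nlinarith [mul_nonneg (show (0:ℝ) ≤ N - 5 by linarith) hx2pos.le])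
    have h2 := Real.exp_pos (-(2 * x2))
    linarith
  have bsinh : 0 ≤ B * Real.sinh ((N - 4) / 2 * x2) :=
    mul_nonneg hB0 (Real.sinh_nonneg_iff.mpr (mul_nonneg (by linarith) hx2pos.le))
  have hCW : (N - 1) ^ 2 * Real.sinh (2 * x2) ≤ (N - 1) ^ 2 * (W / 2) :=
    mul_le_mul_of_nonneg_left bound2 (by positivity)
  have hWN : 1 * (2 * N + 1) ≤ W * (2 * N + 1) :=
    mul_le_mul_of_nonneg_right hW1 (by linarith)
  unfold hfun
  nlinarith [bound1, hCW, bsinh, hWN]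

lemma hfun_exists (N B : ℝ) (hN : 5 ≤ N) (hB0 : 0 ≤ B) (hB1 : B ≤ 2 * (N - 1)) :
    ∃ x0 : ℝ, 0 < x0 ∧ hfun N B x0 = 0 := by
  have hN2 : (0:ℝ) < N - 2 := by linarith
  have hx1 : (0:ℝ) < 1 / (N - 2) := by positivity
  have hx1x2 : 1 / (N - 2) ≤ Real.log (N ^ 2 + 2) := by
    have h1 : 1 / (N - 2) ≤ 1 / 3 := by
      apply one_div_le_one_div_of_le <;> linarith
    have h2 : (1:ℝ) < Real.log (N ^ 2 + 2) := by
      rw [Real.lt_log_iff_exp_lt (by positivity)]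
      have := Real.exp_one_lt_d9
      nlinarith
    linarith
  have hneg := hfun_neg_pt N B hN hB0 hB1
  have hpos := hfun_pos_pt N B hN hB0
  have hsub := intermediate_value_Icc hx1x2 (hfun_cont N B).continuousOn
  have h0mem : (0:ℝ) ∈ Icc (hfun N B (1 / (N - 2))) (hfun N B (Real.log (N ^ 2 + 2))) :=
    ⟨hneg.le, hpos.le⟩
  obtain ⟨x0, hx0mem, hx0⟩ := hsub h0mem
  exact ⟨x0, lt_of_lt_of_le hx1 hx0mem.1, hx0⟩

lemma exp_merge (a b c L : ℝ) (h : a + b = c) :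
    Real.exp (L * a) * Real.exp (L * b) = Real.exp (L * c) := by
  rw [← Real.exp_add, ← mul_add, h]

lemma fchar_eq (n : ℕ) (θ : ℝ) {r : ℝ} (hr : 0 < r) :
    fchar n r θ = 2 * r ^ ((n : ℝ) - 2) *
      hfun (n : ℝ) (2 * ((n : ℝ) - 1) * |Real.cos ((n : ℝ) * θ / 2)|) (Real.log r) := by
  obtain ⟨L, rfl⟩ : ∃ L, r = Real.exp L := ⟨Real.log r, (Real.exp_log hr).symm⟩
  set N : ℝ := (n : ℝ) with hN
  set B : ℝ := 2 * (N - 1) * |Real.cos (N * θ / 2)| with hB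
  simp only [fchar, hfun, Real.rpow_def_of_pos (Real.exp_pos L), Real.log_exp, Real.sinh_eq]
  simp only [← hN, ← hB]
  have p1 := exp_merge (N-2) (N-2) (2*N-4) L (by ring)
  have p2 : Real.exp (L*(N-2)) * Real.exp (L*(-(N-2))) = 1 := by
    rw [← Real.exp_add, ← mul_add]; norm_num
  have p3a := exp_merge (N-2) ((N-4)/2) ((3*N-8)/2) L (by ring)
  have p3b := exp_merge (N/2) (N-4) ((3*N-8)/2) L (by ring)
  have p4 := exp_merge (N-2) (-((N-4)/2)) (N/2) L (by ring)
  have p5 := exp_merge (N-2) 2 N L (by ring)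
  have p6 := exp_merge (N-2) (-2) (N-4) L (by ring)
  linear_combination (norm := ring_nf) (-1 : ℝ)*p1 + p2 + B*p3b - B*p3a + B*p4
    + (N-1)^2*p5 - (N-1)^2*p6

lemma huniq_all (n : ℕ) (hn : 5 ≤ n) (B : ℝ) (hB0 : 0 ≤ B) (hB1 : B ≤ 2 * ((n:ℝ) - 1)) :
    ∀ x y : ℝ, 0 < x → 0 < y → hfun (n:ℝ) B x = 0 → hfun (n:ℝ) B y = 0 → x = y := by
  rcases le_or_gt 8 n with h8 | h8
  · have h8' : (8:ℝ) ≤ (n:ℝ) := by exact_mod_cast h8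
    exact uniq_aux _ B 2 two_pos (fun x hx => pos8 _ B x h8' hB0 hx)
  · interval_cases n
    · have hc : ((5:ℕ):ℝ) = (5:ℝ) := by norm_num
      rw [hc] at hB1 ⊢
      exact uniq_aux 5 B ((5:ℝ) - 2) (by norm_num)
        (fun x hx => pos5 B x hB0 (by linarith) hx)
    · have hc : ((6:ℕ):ℝ) = (6:ℝ) := by norm_num
      rw [hc] at hB1 ⊢
      exact uniq_aux 6 B ((6:ℝ) - 2) (by norm_num)
        (fun x hx => pos6 B x hB0 (by linarith) hx)
    · have hc : ((7:ℕ):ℝ) = (7:ℝ) := by norm_num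
      rw [hc] at hB1 ⊢
      exact uniq_aux 7 B ((7:ℝ) - 2) (by norm_num)
        (fun x hx => pos7 B x hB0 (by linarith) hx)

theorem stmt7 (n : ℕ) (hn : 5 ≤ n) (θ : ℝ) :
    ∃ rD rE : ℝ, 0 < rD ∧ rD < 1 ∧ 1 < rE ∧ rE = 1 / rD ∧
      fchar n rD θ = 0 ∧ fchar n 1 θ = 0 ∧ fchar n rE θ = 0 ∧
      ∀ r : ℝ, 0 < r → fchar n r θ = 0 → r = rD ∨ r = 1 ∨ r = rE := by
  have hN : (5:ℝ) ≤ (n:ℝ) := by exact_mod_cast hn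
  set B : ℝ := 2 * ((n:ℝ) - 1) * |Real.cos ((n:ℝ) * θ / 2)| with hBdef
  have hB0 : 0 ≤ B := mul_nonneg (by linarith) (abs_nonneg _)
  have hB1 : B ≤ 2 * ((n:ℝ) - 1) := by
    have h1 : |Real.cos ((n:ℝ) * θ / 2)| ≤ 1 := abs_cos_le_one _
    nlinarith [abs_nonneg (Real.cos ((n:ℝ) * θ / 2))]
  obtain ⟨x0, hx0pos, hx0zero⟩ := hfun_exists (n:ℝ) B hN hB0 hB1
  have huniq := huniq_all n hn B hB0 hB1
  refine ⟨Real.exp (-x0), Real.exp x0, Real.exp_pos _, ?_, ?_, ?_, ?_, ?_, ?_, ?_⟩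
  · have : Real.exp (-x0) < Real.exp 0 := Real.exp_lt_exp.mpr (by linarith)
    simpa using this
  · have : Real.exp 0 < Real.exp x0 := Real.exp_lt_exp.mpr hx0pos
    simpa using this
  · rw [Real.exp_neg, one_div, inv_inv]
  · rw [fchar_eq n θ (Real.exp_pos (-x0)), Real.log_exp, ← hBdef, hfun_odd, hx0zero]
    ring
  · rw [fchar_eq n θ one_pos, Real.log_one, ← hBdef, hfun_zero]
    ring
  · rw [fchar_eq n θ (Real.exp_pos x0), Real.log_exp, ← hBdef, hx0zero]
    ring
  · intro r hr hfr
    rw [fchar_eq n θ hr, ← hBdef] at hfr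
    have h2 : (2:ℝ) * r ^ ((n:ℝ) - 2) ≠ 0 :=
      ne_of_gt (mul_pos two_pos (Real.rpow_pos_of_pos hr _))
    have h0 : hfun (n:ℝ) B (Real.log r) = 0 := (mul_eq_zero.mp hfr).resolve_left h2
    rcases lt_trichotomy (Real.log r) 0 with hlt | heq | hgt
    · left
      have hzz : hfun (n:ℝ) B (-(Real.log r)) = 0 := by rw [hfun_odd, h0, neg_zero]
      have hxx := huniq (-(Real.log r)) x0 (by linarith) hx0pos hzz hx0zero
      have hlr : Real.log r = -x0 := by linarith
      rw [← Real.exp_log hr, hlr]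
    · right; left
      rw [← Real.exp_log hr, heq, Real.exp_zero]
    · right; right
      have hxx := huniq (Real.log r) x0 hgt hx0pos h0 hx0zero
      rw [← Real.exp_log hr, hxx]
end

section
/- For n ≥ 5 and any θ ∈ ℝ, every positive zero r of the characteristic function f_n(·, θ) satisfies r < (n-1)^{2/(n-4)}; moreover (n-1)^{2/(n-4)} → 1 as n → ∞. -/
open Complex Real Filter

theorem stmt8 (n : ℕ) (hn : 5 ≤ n) (θ : ℝ) :
    (∀ r : ℝ, 0 < r → fchar n r θ = 0 → r < ((n : ℝ) - 1) ^ (2 / ((n : ℝ) - 4))) ∧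
    Filter.Tendsto (fun m : ℕ => ((m : ℝ) - 1) ^ (2 / ((m : ℝ) - 4))) Filter.atTop (nhds 1) := by
  have hn5 : (5 : ℝ) ≤ (n : ℝ) := by exact_mod_cast hn
  have hn1 : (4 : ℝ) ≤ (n : ℝ) - 1 := by linarith
  have hn4 : (0 : ℝ) < (n : ℝ) - 4 := by linarith
  constructor
  · intro r hr hf
    by_contra hge
    push_neg at hge
    set R : ℝ := ((n : ℝ) - 1) ^ (2 / ((n : ℝ) - 4)) with hR
    -- key: r ^ (n-4) ≥ (n-1)^2
    have hR0 : (0 : ℝ) < R := Real.rpow_pos_of_pos (by linarith) _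
    have hkey : ((n : ℝ) - 1) ^ 2 ≤ r ^ ((n : ℝ) - 4) := by
      have h1 : R ^ ((n : ℝ) - 4) ≤ r ^ ((n : ℝ) - 4) :=
        Real.rpow_le_rpow hR0.le hge hn4.le
      have h2 : R ^ ((n : ℝ) - 4) = ((n : ℝ) - 1) ^ (2 : ℝ) := by
        rw [hR, ← Real.rpow_mul (by linarith), div_mul_cancel₀ _ hn4.ne']
      rw [← Real.rpow_two]
      calc ((n:ℝ) - 1) ^ (2:ℝ) = R ^ ((n : ℝ) - 4) := h2.symm
        _ ≤ _ := h1
    have hr1 : (1 : ℝ) < r ^ ((n : ℝ) - 4) := by nlinarith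
    have hsplit : r ^ (2 * (n : ℝ) - 4) = r ^ ((n : ℝ) - 4) * r ^ (n : ℝ) := by
      rw [← Real.rpow_add hr]; ring_nf
    have hrn : (0 : ℝ) < r ^ (n : ℝ) := Real.rpow_pos_of_pos hr _
    have hmid : 0 ≤ 2 * ((n : ℝ) - 1) * |Real.cos ((n : ℝ) * θ / 2)| * r ^ ((n : ℝ) / 2)
        * (r ^ ((n : ℝ) - 4) - 1) := by
      have := abs_nonneg (Real.cos ((n : ℝ) * θ / 2))
      have := (Real.rpow_pos_of_pos hr ((n : ℝ) / 2)).le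
      have : (0:ℝ) ≤ 2 * ((n : ℝ) - 1) * |Real.cos ((n : ℝ) * θ / 2)| * r ^ ((n : ℝ) / 2) := by
        positivity
      nlinarith
    have hpos : 0 < fchar n r θ := by
      unfold fchar
      rw [hsplit]
      nlinarith [hkey, hrn, hmid, sq_nonneg ((n:ℝ) - 1)]
    exact hpos.ne' hf
  · have h := tendsto_rpow_div_mul_add (2 : ℝ) 1 (-3) zero_ne_one
    have hc : Tendsto (fun m : ℕ => (m : ℝ) - 1) atTop atTop :=
      tendsto_atTop_add_const_right _ _ tendsto_natCast_atTop_atTop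
    have := h.comp hc
    refine this.congr fun m => ?_
    simp only [Function.comp_apply]
    ring_nf
end

section
/- For n ≥ 5 and θ ∈ ℝ, the derivative ∂f_n/∂r evaluated at r = 1 satisfies f_n'(1, θ) ≤ -2n², and in particular f_n'(1, θ) < 0. -/
open Complex Real Filter

theorem stmt9 (n : ℕ) (hn : 5 ≤ n) (θ : ℝ) :
    deriv (fun r : ℝ => fchar n r θ) 1 ≤ -2 * (n : ℝ) ^ 2 ∧
    deriv (fun r : ℝ => fchar n r θ) 1 < 0 := by
  set c : ℝ := |Real.cos ((n : ℝ) * θ / 2)| with hc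
  have hc0 : 0 ≤ c := abs_nonneg _
  have hc1 : c ≤ 1 := abs_cos_le_one _
  have hn5 : (5 : ℝ) ≤ (n : ℝ) := by exact_mod_cast hn
  have hA : HasDerivAt (fun r : ℝ => r ^ (2 * (n : ℝ) - 4))
      ((2 * (n : ℝ) - 4) * (1 : ℝ) ^ (2 * (n : ℝ) - 4 - 1)) 1 :=
    Real.hasDerivAt_rpow_const (Or.inl one_ne_zero)
  have hB : HasDerivAt (fun r : ℝ => r ^ ((n : ℝ) / 2))
      (((n : ℝ) / 2) * (1 : ℝ) ^ ((n : ℝ) / 2 - 1)) 1 :=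
    Real.hasDerivAt_rpow_const (Or.inl one_ne_zero)
  have hC : HasDerivAt (fun r : ℝ => r ^ ((n : ℝ) - 4))
      (((n : ℝ) - 4) * (1 : ℝ) ^ ((n : ℝ) - 4 - 1)) 1 :=
    Real.hasDerivAt_rpow_const (Or.inl one_ne_zero)
  have hD : HasDerivAt (fun r : ℝ => r ^ ((n : ℝ)))
      ((n : ℝ) * (1 : ℝ) ^ ((n : ℝ) - 1)) 1 :=
    Real.hasDerivAt_rpow_const (Or.inl one_ne_zero)
  have H :=
    ((((hA.add ((hB.const_mul (2 * ((n : ℝ) - 1) * c)).mul (hC.sub_const 1))).sub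
      (hD.const_mul (((n : ℝ) - 1) ^ 2))).add
      (hC.const_mul (((n : ℝ) - 1) ^ 2))).sub_const 1)
  have Hfun : (fun r : ℝ => fchar n r θ) =
      (fun x : ℝ => x ^ (2 * (n : ℝ) - 4) +
        2 * ((n : ℝ) - 1) * c * x ^ ((n : ℝ) / 2) * (x ^ ((n : ℝ) - 4) - 1) -
        ((n : ℝ) - 1) ^ 2 * x ^ ((n : ℝ)) +
        ((n : ℝ) - 1) ^ 2 * x ^ ((n : ℝ) - 4) - 1) := by
    funext r; simp only [fchar, hc]
  have Hd : deriv (fun r : ℝ => fchar n r θ) =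
      deriv (fun x : ℝ => x ^ (2 * (n : ℝ) - 4) +
        2 * ((n : ℝ) - 1) * c * x ^ ((n : ℝ) / 2) * (x ^ ((n : ℝ) - 4) - 1) -
        ((n : ℝ) - 1) ^ 2 * x ^ ((n : ℝ)) +
        ((n : ℝ) - 1) ^ 2 * x ^ ((n : ℝ) - 4) - 1) := by rw [Hfun]
  have H2 : HasDerivAt (fun x : ℝ => x ^ (2 * (n : ℝ) - 4) +
        2 * ((n : ℝ) - 1) * c * x ^ ((n : ℝ) / 2) * (x ^ ((n : ℝ) - 4) - 1) -
        ((n : ℝ) - 1) ^ 2 * x ^ ((n : ℝ)) +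
        ((n : ℝ) - 1) ^ 2 * x ^ ((n : ℝ) - 4) - 1)
      (2 * (n : ℝ) - 4 + 2 * ((n : ℝ) - 1) * c * ((n : ℝ) - 4) -
        ((n : ℝ) - 1) ^ 2 * (n : ℝ) + ((n : ℝ) - 1) ^ 2 * ((n : ℝ) - 4)) 1 := by
    refine H.congr_deriv ?_
    simp only [Real.one_rpow, mul_one, one_mul]; ring
  have hval : deriv (fun r : ℝ => fchar n r θ) 1 =
      2 * (n : ℝ) - 4 + 2 * ((n : ℝ) - 1) * c * ((n : ℝ) - 4) -
        ((n : ℝ) - 1) ^ 2 * (n : ℝ) + ((n : ℝ) - 1) ^ 2 * ((n : ℝ) - 4) := by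
    rw [Hd, H2.deriv]
  have hprod : 0 ≤ ((n : ℝ) - 1) * ((n : ℝ) - 4) * (1 - c) :=
    mul_nonneg (mul_nonneg (by linarith) (by linarith)) (by linarith)
  have h1 : deriv (fun r : ℝ => fchar n r θ) 1 ≤ -2 * (n : ℝ) ^ 2 := by
    rw [hval]; nlinarith [hprod]
  exact ⟨h1, lt_of_le_of_lt h1 (by nlinarith)⟩
end

section
/- For n ≥ 5 and θ ∈ ℝ, f_n((n-1)^{2/(n-4)}, θ) = (n-1)⁴ - 1 + 2n(n-2)(n-1)^{(2n-4)/(n-4)} |cos(nθ/2)|, which is strictly positive. -/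
open Complex Real Filter

theorem stmt10 (n : ℕ) (hn : 5 ≤ n) (θ : ℝ) :
    fchar n (((n : ℝ) - 1) ^ (2 / ((n : ℝ) - 4))) θ
      = ((n : ℝ) - 1) ^ 4 - 1
        + 2 * (n : ℝ) * ((n : ℝ) - 2) * ((n : ℝ) - 1) ^ ((2 * (n : ℝ) - 4) / ((n : ℝ) - 4))
          * |Real.cos ((n : ℝ) * θ / 2)| ∧
    0 < fchar n (((n : ℝ) - 1) ^ (2 / ((n : ℝ) - 4))) θ := by
  have hn5 : (5 : ℝ) ≤ (n : ℝ) := by exact_mod_cast hn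
  have ha0 : (0 : ℝ) < (n : ℝ) - 1 := by linarith
  have ha1 : (1 : ℝ) < (n : ℝ) - 1 := by linarith
  have hc : (0 : ℝ) < (n : ℝ) - 4 := by linarith
  have hcne : ((n : ℝ) - 4) ≠ 0 := ne_of_gt hc
  have hr : ∀ x : ℝ, (((n : ℝ) - 1) ^ (2 / ((n : ℝ) - 4))) ^ x
      = ((n : ℝ) - 1) ^ (2 * x / ((n : ℝ) - 4)) := by
    intro x
    rw [← Real.rpow_mul ha0.le]
    congr 1
    ring
  have e3 : 2 * ((n : ℝ) - 4) / ((n : ℝ) - 4) = 2 := by field_simp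
  have e2 : ((n : ℝ) - 1) ^ (2 : ℝ) = ((n : ℝ) - 1) ^ (2 : ℕ) := by
    rw [show (2 : ℝ) = ((2 : ℕ) : ℝ) by norm_num, Real.rpow_natCast]
  have hT1 : ((n : ℝ) - 1) ^ (2 * (2 * (n : ℝ) - 4) / ((n : ℝ) - 4))
      = ((n : ℝ) - 1) ^ (2 : ℕ) * ((n : ℝ) - 1) ^ (2 * (n : ℝ) / ((n : ℝ) - 4)) := by
    rw [← Real.rpow_natCast ((n : ℝ) - 1) 2, ← Real.rpow_add ha0]
    congr 1
    field_simp
    ring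
  have hT2 : ((n : ℝ) - 1) * ((n : ℝ) - 1) ^ (2 * ((n : ℝ) / 2) / ((n : ℝ) - 4))
      = ((n : ℝ) - 1) ^ ((2 * (n : ℝ) - 4) / ((n : ℝ) - 4)) := by
    nth_rewrite 1 [← Real.rpow_one ((n : ℝ) - 1)]
    rw [← Real.rpow_add ha0]
    congr 1
    field_simp
    ring
  have key : fchar n (((n : ℝ) - 1) ^ (2 / ((n : ℝ) - 4))) θ
      = ((n : ℝ) - 1) ^ 4 - 1
        + 2 * (n : ℝ) * ((n : ℝ) - 2) * ((n : ℝ) - 1) ^ ((2 * (n : ℝ) - 4) / ((n : ℝ) - 4))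
          * |Real.cos ((n : ℝ) * θ / 2)| := by
    simp only [fchar]
    rw [hr (2 * (n : ℝ) - 4), hr ((n : ℝ) / 2), hr ((n : ℝ) - 4), hr (n : ℝ), e3, e2, hT1, ← hT2]
    ring
  refine ⟨key, ?_⟩
  rw [key]
  have ht : (0 : ℝ) < ((n : ℝ) - 1) ^ ((2 * (n : ℝ) - 4) / ((n : ℝ) - 4)) :=
    Real.rpow_pos_of_pos ha0 _
  have habs : (0 : ℝ) ≤ |Real.cos ((n : ℝ) * θ / 2)| := abs_nonneg _
  have h4 : (1 : ℝ) < ((n : ℝ) - 1) ^ 4 := one_lt_pow₀ ha1 (by norm_num)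
  nlinarith [mul_nonneg (mul_nonneg (mul_nonneg (by linarith : (0:ℝ) ≤ 2 * (n:ℝ)) (by linarith : (0:ℝ) ≤ (n:ℝ) - 2)) ht.le) habs]
end

section
/- For n ≥ 2, r > 0, and θ ∈ ℝ, the condition |L_p(re^{iθ})| = 1/r holds if and only if f_n(r, θ) = 0; similarly |L_p(re^{iθ})| > 1/r iff f_n(r, θ) < 0, and |L_p(re^{iθ})| < 1/r iff f_n(r, θ) > 0. -/
open Complex Real Filter

set_option maxHeartbeats 1000000 in
theorem stmt11 (n : ℕ) (hn : 2 ≤ n) (r θ : ℝ) (hr : 0 < r) :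
    (‖Lp n ((r : ℂ) * Complex.exp (θ * Complex.I))‖ = 1 / r ↔ fchar n r θ = 0) ∧
    (1 / r < ‖Lp n ((r : ℂ) * Complex.exp (θ * Complex.I))‖ ↔ fchar n r θ < 0) ∧
    (‖Lp n ((r : ℂ) * Complex.exp (θ * Complex.I))‖ < 1 / r ↔ 0 < fchar n r θ) := by
  set z : ℂ := (r : ℂ) * Complex.exp (θ * Complex.I) with hzdef
  set M : ℝ := (n : ℝ) - 1 with hMdef
  have hn2 : (2 : ℝ) ≤ (n : ℝ) := by exact_mod_cast hn
  have hM : 1 ≤ M := by simp only [hMdef]; linarith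
  have hz : z ≠ 0 := by
    apply mul_ne_zero
    · exact_mod_cast hr.ne'
    · exact Complex.exp_ne_zero _
  have hzn : z ^ n ≠ 0 := pow_ne_zero _ hz
  set w : ℂ := (z ^ n) ^ ((1 : ℂ) / 2) with hwdef
  have hw0 : w ≠ 0 := by
    rw [hwdef, Ne, Complex.cpow_eq_zero_iff]
    tauto
  have habsz : ‖z‖ = r := by
    rw [hzdef, norm_mul, Complex.norm_exp]
    simp [abs_of_pos hr]
  have hznval : z ^ n = (r : ℂ) ^ n * Complex.exp ((n * θ : ℝ) * Complex.I) := by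
    rw [hzdef, mul_pow, ← Complex.exp_nat_mul]
    push_cast
    ring_nf
  have habszn : ‖z ^ n‖ = r ^ (n : ℝ) := by
    rw [norm_pow, habsz, ← Real.rpow_natCast]
  set t : ℝ := r ^ ((n : ℝ) / 2) with htdef
  have ht : 0 < t := Real.rpow_pos_of_pos hr _
  set c : ℝ := |Real.cos ((n : ℝ) * θ / 2)| with hcdef
  have hc0 : 0 ≤ c := abs_nonneg _
  have hlogre : (Complex.log (z ^ n)).re = (n : ℝ) * Real.log r := by
    rw [Complex.log_re, habszn, Real.log_rpow hr]
  have hwre : w.re = t * c := by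
    rw [hwdef, Complex.cpow_def_of_ne_zero hzn, Complex.exp_re]
    have him : (Complex.log (z ^ n) * (1 / 2)).im = Complex.arg (z ^ n) / 2 := by
      simp [Complex.log_im]
      ring
    have hre : (Complex.log (z ^ n) * (1 / 2)).re = (n : ℝ) * Real.log r / 2 := by
      simp [hlogre]
      ring
    rw [him, hre]
    have h1 : Real.exp ((n : ℝ) * Real.log r / 2) = t := by
      rw [htdef, Real.rpow_def_of_pos hr]
      ring_nf
    have hcosarg : Real.cos (Complex.arg (z ^ n)) = Real.cos ((n : ℝ) * θ) := by
      have hre2 : (z ^ n).re = r ^ (n : ℝ) * Real.cos ((n : ℝ) * θ) := by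
        rw [hznval, ← Complex.ofReal_pow, Complex.re_ofReal_mul,
          Complex.exp_ofReal_mul_I_re, ← Real.rpow_natCast]
      rw [Complex.cos_arg hzn, habszn, hre2]
      field_simp
    have h2 : Real.cos (Complex.arg (z ^ n) / 2) = c := by
      rw [Real.cos_half (by linarith [Complex.neg_pi_lt_arg (z ^ n)])
        (Complex.arg_le_pi (z ^ n)), hcosarg, hcdef,
        ← Real.sqrt_sq_eq_abs, Real.cos_sq]
      congr 1
      ring_nf
    rw [h1, h2]
  have habsw : ‖w‖ = t := by
    rw [hwdef, Complex.norm_cpow_of_ne_zero hzn, habszn]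
    have h12re : ((1:ℂ)/2).re = (1/2 : ℝ) := by norm_num
    have h12im : ((1:ℂ)/2).im = 0 := by norm_num
    rw [h12re, h12im, mul_zero, Real.exp_zero, div_one, ← Real.rpow_mul hr.le]
    congr 1
    ring
  have hwim2 : w.im ^ 2 = t ^ 2 - (t * c) ^ 2 := by
    have h := Complex.sq_norm w
    rw [habsw, Complex.normSq_apply, hwre] at h
    nlinarith [h]
  -- c ≤ 1
  have hc1 : c ≤ 1 := abs_cos_le_one _
  set A : ℝ := 1 + 2 * M * t * c + M ^ 2 * t ^ 2 with hAdef
  set B : ℝ := t ^ 2 + 2 * M * t * c + M ^ 2 with hBdef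
  have hA : 0 < A := by positivity
  have hB : 0 < B := by positivity
  -- denominator nonzero
  have hwM : w + ((n : ℂ) - 1) ≠ 0 := by
    intro h
    have : (w + ((n : ℂ) - 1)).re = 0 := by rw [h]; simp
    simp only [Complex.add_re, Complex.sub_re, Complex.natCast_re, Complex.one_re] at this
    rw [hwre] at this
    have htc : 0 ≤ t * c := by positivity
    simp only [hMdef] at hM
    linarith
  -- abs of numerator factor
  have hnum : w⁻¹ + ((n : ℂ) - 1) = (1 + ((n : ℂ) - 1) * w) / w := by
    field_simp
  have habs1 : (‖1 + ((n : ℂ) - 1) * w‖) ^ 2 = A := by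
    rw [Complex.sq_norm, Complex.normSq_apply]
    have hMre : ((n : ℂ) - 1).re = M := by simp [hMdef]
    have hMim : ((n : ℂ) - 1).im = 0 := by simp
    simp only [Complex.add_re, Complex.add_im, Complex.one_re, Complex.one_im,
      Complex.mul_re, Complex.mul_im, hMre, hMim]
    rw [hwre]
    nlinarith [hwim2]
  have habs2 : (‖w + ((n : ℂ) - 1)‖) ^ 2 = B := by
    rw [Complex.sq_norm, Complex.normSq_apply]
    have hMre : ((n : ℂ) - 1).re = M := by simp [hMdef]
    have hMim : ((n : ℂ) - 1).im = 0 := by simp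
    simp only [Complex.add_re, Complex.add_im, hMre, hMim]
    rw [hwre]
    nlinarith [hwim2]
  -- square of abs of Lp
  set X : ℝ := ‖Lp n z‖ with hXdef
  have hX0 : 0 ≤ X := norm_nonneg _
  have hX2 : X ^ 2 * (t ^ 2 * B) = r ^ 2 * A := by
    rw [hXdef]
    unfold Lp
    rw [← hwdef, hnum]
    rw [norm_div, norm_mul, norm_div]
    rw [habsz]
    rw [div_pow, mul_pow, div_pow]
    rw [habs1, habs2, habsw]
    field_simp
  -- fchar in terms of t, A, B
  have hrn : r ^ (n : ℝ) = t ^ 2 := by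
    rw [htdef, ← Real.rpow_natCast (r ^ ((n:ℝ)/2)) 2, ← Real.rpow_mul hr.le]
    norm_num
  have h4 : r ^ (4:ℝ) = r ^ (4:ℕ) := by
    rw [← Real.rpow_natCast r 4]; norm_num
  have hrn4 : r ^ ((n : ℝ) - 4) = t ^ 2 / r ^ 4 := by
    rw [Real.rpow_sub hr, hrn, h4]
  have hr2n4 : r ^ (2 * (n : ℝ) - 4) = t ^ 4 / r ^ 4 := by
    rw [Real.rpow_sub hr]
    have : r ^ (2 * (n : ℝ)) = t ^ 4 := by
      rw [htdef, ← Real.rpow_natCast (r ^ ((n:ℝ)/2)) 4, ← Real.rpow_mul hr.le]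
      ring_nf
    rw [this, h4]
  have hfval : fchar n r θ = (t ^ 2 * B - r ^ 4 * A) / r ^ 4 := by
    unfold fchar
    rw [hr2n4, hrn4, hrn, ← hMdef, ← hcdef, ← htdef, hAdef, hBdef]
    field_simp
    ring
  have hr4 : (0:ℝ) < r ^ 4 := by positivity
  -- comparisons
  have hq : X ^ 2 = r ^ 2 * A / (t ^ 2 * B) := by
    rw [← hX2]
    field_simp
  have hinv2 : (1 / r) ^ 2 = 1 / r ^ 2 := by
    rw [div_pow]; norm_num
  have hinvpos : 0 < 1 / r := by positivity
  have htB : (0:ℝ) < t ^ 2 * B := by positivity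
  have hr2 : (0:ℝ) < r ^ 2 := by positivity
  have hra : r ^ 2 * A * r ^ 2 = r ^ 4 * A := by ring
  have key1 : X = 1 / r ↔ t ^ 2 * B = r ^ 4 * A := by
    rw [← sq_eq_sq₀ hX0 hinvpos.le, hq, hinv2, div_eq_div_iff htB.ne' hr2.ne', one_mul, hra, eq_comm]
  have key2 : 1 / r < X ↔ t ^ 2 * B < r ^ 4 * A := by
    rw [show (1 / r < X) ↔ (1 / r) ^ 2 < X ^ 2 from
      (pow_lt_pow_iff_left₀ hinvpos.le hX0 (by norm_num)).symm,
      hq, hinv2, div_lt_div_iff₀ hr2 htB, one_mul, hra]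
  have key3 : X < 1 / r ↔ r ^ 4 * A < t ^ 2 * B := by
    rw [show (X < 1 / r) ↔ X ^ 2 < (1 / r) ^ 2 from
      (pow_lt_pow_iff_left₀ hX0 hinvpos.le (by norm_num)).symm,
      hq, hinv2, div_lt_div_iff₀ htB hr2, one_mul, hra]
  refine ⟨?_, ?_, ?_⟩
  · rw [key1, hfval, div_eq_zero_iff]
    constructor
    · intro h; left; linarith
    · rintro (h | h)
      · linarith
      · exact absurd h hr4.ne'
  · rw [key2, hfval, div_lt_iff₀ hr4, zero_mul]
    constructor <;> intro h <;> linarith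
  · rw [key3, hfval, lt_div_iff₀ hr4, zero_mul]
    constructor <;> intro h <;> linarith
end

section
/- The function g(θ) = θ - 2 arctan( sin(nθ/2) / (cos(nθ/2) + n - 1) ) satisfies g(0) = 0 and g'(θ) = 2(n-1)(n-2) sin²(nθ/4) / ((cos(nθ/2) + n - 1)² + sin²(nθ/2)) > 0 for 0 < θ ≤ π/n, hence g(θ) > 0 for 0 < θ ≤ π/n. -/
open Complex Real Filter

private lemma key_alg (nr s c S : ℝ) (hn3 : 3 ≤ nr) (pyth : s^2 + c^2 = 1)
    (hc2 : c = 1 - 2*S^2) (hd : 0 < c + nr - 1) :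
    1 - 2*((1/(1+(s/(c+nr-1))^2)) * ((c*(nr/2)*(c+nr-1) - s*(-s*(nr/2)))/(c+nr-1)^2))
      = 2*(nr-1)*(nr-2)*S^2/((c+nr-1)^2+s^2) := by
  have hs2 : s^2 = 1 - c^2 := by linarith
  rw [div_pow, show c*(nr/2)*(c+nr-1) - s*(-s*(nr/2)) = c*(nr/2)*(c+nr-1) + s^2*(nr/2) from by ring,
    hs2, hc2]
  have hd' : (0:ℝ) < 1 - 2*S^2 + nr - 1 := by rw [hc2] at hd; exact hd
  have hD : (0:ℝ) < (1 - 2*S^2 + nr - 1)^2 + (1 - (1-2*S^2)^2) := by nlinarith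
  field_simp
  ring

theorem stmt13 (n : ℕ) (hn : 3 ≤ n) :
    let g : ℝ → ℝ := fun θ =>
      θ - 2 * Real.arctan (Real.sin ((n : ℝ) * θ / 2) / (Real.cos ((n : ℝ) * θ / 2) + (n : ℝ) - 1))
    g 0 = 0 ∧
    (∀ θ : ℝ, 0 < θ → θ ≤ Real.pi / n →
      deriv g θ = 2 * ((n : ℝ) - 1) * ((n : ℝ) - 2) * Real.sin ((n : ℝ) * θ / 4) ^ 2 /
          ((Real.cos ((n : ℝ) * θ / 2) + (n : ℝ) - 1) ^ 2 + Real.sin ((n : ℝ) * θ / 2) ^ 2) ∧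
      0 < deriv g θ) ∧
    (∀ θ : ℝ, 0 < θ → θ ≤ Real.pi / n → 0 < g θ) := by
  intro g
  have hn3 : (3:ℝ) ≤ (n:ℝ) := by exact_mod_cast hn
  have hd : ∀ θ : ℝ, 0 < Real.cos ((n:ℝ)*θ/2) + (n:ℝ) - 1 := fun θ => by
    have := Real.neg_one_le_cos ((n:ℝ)*θ/2); linarith
  -- derivative at every point
  have hder : ∀ θ : ℝ, HasDerivAt g
      (1 - 2 * (1 / (1 + (Real.sin ((n:ℝ)*θ/2) / (Real.cos ((n:ℝ)*θ/2) + (n:ℝ) - 1))^2) *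
        ((Real.cos ((n:ℝ)*θ/2) * ((n:ℝ)/2) * (Real.cos ((n:ℝ)*θ/2) + (n:ℝ) - 1) -
          Real.sin ((n:ℝ)*θ/2) * (-Real.sin ((n:ℝ)*θ/2) * ((n:ℝ)/2))) /
          (Real.cos ((n:ℝ)*θ/2) + (n:ℝ) - 1)^2))) θ := by
    intro θ
    have h1 : HasDerivAt (fun θ : ℝ => (n:ℝ)*θ/2) ((n:ℝ)/2) θ := by
      simpa using ((hasDerivAt_id θ).const_mul (n:ℝ)).div_const 2
    have hs := (Real.hasDerivAt_sin ((n:ℝ)*θ/2)).comp θ h1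
    have hc := (Real.hasDerivAt_cos ((n:ℝ)*θ/2)).comp θ h1
    have hden : HasDerivAt (fun θ : ℝ => Real.cos ((n:ℝ)*θ/2) + (n:ℝ) - 1)
        (-Real.sin ((n:ℝ)*θ/2) * ((n:ℝ)/2)) θ := by
      simpa using (hc.add_const (n:ℝ)).sub_const 1
    have hu := hs.div hden (ne_of_gt (hd θ))
    have ha := (Real.hasDerivAt_arctan _).comp θ hu
    have h2 := (hasDerivAt_id θ).sub (ha.const_mul 2)
    simpa [g, Function.comp, Pi.sub_def] using h2
  -- closed form of the derivative (valid everywhere)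
  have hderiv : ∀ θ : ℝ, deriv g θ =
      2 * ((n:ℝ) - 1) * ((n:ℝ) - 2) * Real.sin ((n:ℝ)*θ/4)^2 /
        ((Real.cos ((n:ℝ)*θ/2) + (n:ℝ) - 1)^2 + Real.sin ((n:ℝ)*θ/2)^2) := by
    intro θ
    rw [(hder θ).deriv]
    have pyth : Real.sin ((n:ℝ)*θ/2)^2 + Real.cos ((n:ℝ)*θ/2)^2 = 1 :=
      Real.sin_sq_add_cos_sq _
    have hc2 : Real.cos ((n:ℝ)*θ/2) = 1 - 2 * Real.sin ((n:ℝ)*θ/4)^2 := by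
      rw [show (n:ℝ)*θ/2 = 2*((n:ℝ)*θ/4) by ring, Real.cos_two_mul']
      have := Real.sin_sq_add_cos_sq ((n:ℝ)*θ/4)
      linarith
    exact key_alg (n:ℝ) _ _ _ hn3 pyth hc2 (hd θ)
  have hg0 : g 0 = 0 := by simp [g]
  -- positivity of the derivative on (0, π/n]
  have hpos : ∀ θ : ℝ, 0 < θ → θ ≤ Real.pi / n → 0 < deriv g θ := by
    intro θ hθ hθ'
    rw [hderiv θ]
    have hn0 : (0:ℝ) < (n:ℝ) := by linarith
    have hS : 0 < Real.sin ((n:ℝ)*θ/4) := by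
      apply Real.sin_pos_of_pos_of_lt_pi
      · positivity
      · have hπ : (n:ℝ) * θ ≤ Real.pi := by
          rw [le_div_iff₀ hn0] at hθ'
          linarith [hθ']
        nlinarith [Real.pi_pos]
    have := hd θ
    have hD : 0 < (Real.cos ((n:ℝ)*θ/2) + (n:ℝ) - 1)^2 + Real.sin ((n:ℝ)*θ/2)^2 := by
      positivity
    apply div_pos
    · have h1 : (0:ℝ) < ((n:ℝ)-1)*((n:ℝ)-2) := by nlinarith
      nlinarith [mul_pos h1 (mul_pos hS hS)]
    · exact hD
  refine ⟨hg0, fun θ hθ hθ' => ⟨hderiv θ, hpos θ hθ hθ'⟩, ?_⟩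
  -- strict monotonicity gives positivity of g
  intro θ hθ hθ'
  have hcont : Continuous g := by
    rw [continuous_iff_continuousAt]
    exact fun x => (hder x).differentiableAt.continuousAt
  have hmono : StrictMonoOn g (Set.Icc 0 (Real.pi / n)) := by
    apply strictMonoOn_of_deriv_pos (convex_Icc _ _) (hcont.continuousOn)
    intro x hx
    rw [interior_Icc] at hx
    exact hpos x hx.1 hx.2.le
  have hπn : 0 < Real.pi / n := by positivity
  have h0mem : (0:ℝ) ∈ Set.Icc 0 (Real.pi / n) := ⟨le_refl 0, hπn.le⟩
  have hθmem : θ ∈ Set.Icc 0 (Real.pi / n) := ⟨hθ.le, hθ'⟩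
  have := hmono h0mem hθmem hθ
  rwa [hg0] at this
end

section
/- Let n ≥ 5 and let s₀ be the minimum over θ of the smallest positive root r_D(θ) of f_n(·, θ). If 0 < |z| < s₀ then |L_p(z)| > 1/s₀, and if |z| > 1/s₀ then 0 < |L_p(z)| < s₀. That is, L_p maps the punctured disk D_{s₀} into the exterior region E_{s₀} and vice versa. -/
open Complex Real Filter

/-- `arg (z^n)` as an angle is `n • arg z`. -/
lemma arg_pow_angle (z : ℂ) (hz : z ≠ 0) (n : ℕ) :
    (((z ^ n).arg : ℝ) : Real.Angle) = n • ((z.arg : ℝ) : Real.Angle) := by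
  induction n with
  | zero => simp
  | succ m ih =>
    rw [pow_succ, Complex.arg_mul_coe_angle (pow_ne_zero m hz) hz, ih, succ_nsmul]

/-- `fchar` is negative for small positive `r`. -/
lemma fchar_small (n : ℕ) (hn : 5 ≤ n) (θ ε : ℝ) (h0 : 0 < ε) (hε1 : ε ≤ 1)
    (hsm : ε * (n : ℝ) ^ 2 < 1) : fchar n ε θ < 0 := by
  have hn' : (5 : ℝ) ≤ (n : ℝ) := by exact_mod_cast hn
  set c := |Real.cos ((n : ℝ) * θ / 2)| with hc
  have hc0 : 0 ≤ c := abs_nonneg _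
  have hc1 : c ≤ 1 := Real.abs_cos_le_one _
  have A : ε ^ (2 * (n : ℝ) - 4) ≤ ε := by
    have := Real.rpow_le_rpow_of_exponent_ge h0 hε1 (show (1:ℝ) ≤ 2*(n:ℝ)-4 by linarith)
    rwa [Real.rpow_one] at this
  have B : ε ^ ((n : ℝ) - 4) ≤ ε := by
    have := Real.rpow_le_rpow_of_exponent_ge h0 hε1 (show (1:ℝ) ≤ (n:ℝ)-4 by linarith)
    rwa [Real.rpow_one] at this
  have B1 : ε ^ ((n : ℝ) - 4) ≤ 1 := Real.rpow_le_one h0.le hε1 (by linarith)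
  have Cpos : (0:ℝ) ≤ ε ^ ((n : ℝ) / 2) := (Real.rpow_pos_of_pos h0 _).le
  have Dpos : (0:ℝ) < ε ^ (n : ℝ) := Real.rpow_pos_of_pos h0 _
  have hterm2 : 2 * ((n : ℝ) - 1) * c * ε ^ ((n : ℝ) / 2) * (ε ^ ((n : ℝ) - 4) - 1) ≤ 0 := by
    apply mul_nonpos_of_nonneg_of_nonpos
    · exact mul_nonneg (mul_nonneg (by linarith) hc0) Cpos
    · linarith
  simp only [fchar, ← hc]
  nlinarith [mul_le_mul_of_nonneg_left B (show (0:ℝ) ≤ ((n:ℝ)-1)^2 by positivity),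
    mul_pos (show (0:ℝ) < ((n:ℝ)-1)^2 by nlinarith) Dpos]

/-- `fchar` is negative below the unique root. -/
lemma fchar_neg (n : ℕ) (hn : 5 ≤ n) (θ R : ℝ) (hR0 : 0 < R) (hR1 : R < 1)
    (hzero : fchar n R θ = 0)
    (huniq : ∀ r : ℝ, 0 < r → r < 1 → fchar n r θ = 0 → r = R)
    (r : ℝ) (hr0 : 0 < r) (hrR : r < R) : fchar n r θ < 0 := by
  by_contra hcon
  push_neg at hcon
  have hn2 : (0:ℝ) < (n:ℝ)^2 := by positivity
  set ε := min r (1 / (2 * (n : ℝ) ^ 2)) with hε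
  have hε0 : 0 < ε := lt_min hr0 (by positivity)
  have hεr : ε ≤ r := min_le_left _ _
  have hε1 : ε ≤ 1 := by
    have h2 : ε ≤ 1 / (2 * (n : ℝ) ^ 2) := min_le_right _ _
    have : (1:ℝ) ≤ (n:ℝ)^2 := by nlinarith [show (5:ℝ) ≤ (n:ℝ) by exact_mod_cast hn]
    have : 1 / (2 * (n : ℝ) ^ 2) ≤ 1 := by
      rw [div_le_one (by positivity)]; nlinarith
    linarith
  have hsm : ε * (n : ℝ) ^ 2 < 1 := by
    have h2 : ε ≤ 1 / (2 * (n : ℝ) ^ 2) := min_le_right _ _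
    have := mul_le_mul_of_nonneg_right h2 hn2.le
    have h3 : 1 / (2 * (n : ℝ) ^ 2) * (n:ℝ)^2 = 1/2 := by field_simp
    rw [h3] at this
    linarith
  have hfε : fchar n ε θ < 0 := fchar_small n hn θ ε hε0 hε1 hsm
  have hcont : ContinuousOn (fun t : ℝ => fchar n t θ) (Set.Icc ε r) := by
    have hx : ∀ x : ℝ, ContinuousOn (fun t : ℝ => t ^ x) (Set.Icc ε r) := by
      intro x
      exact ContinuousOn.rpow_const continuousOn_id
        (fun t ht => Or.inl (ne_of_gt (lt_of_lt_of_le hε0 ht.1)))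
    simp only [fchar]
    exact ((((hx _).add (((continuousOn_const.mul (hx _)).mul
      ((hx _).sub continuousOn_const)))).sub (continuousOn_const.mul (hx _))).add
      (continuousOn_const.mul (hx _))).sub continuousOn_const
  have hmem : (0:ℝ) ∈ Set.Icc (fchar n ε θ) (fchar n r θ) := ⟨hfε.le, hcon⟩
  obtain ⟨t, ht, ht0⟩ := intermediate_value_Icc hεr hcont hmem
  have ht0' : t = R := huniq t (lt_of_lt_of_le hε0 ht.1)
    (lt_of_le_of_lt ht.2 (lt_trans hrR hR1)) ht0
  have : t ≤ r := ht.2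
  rw [ht0'] at this
  linarith

/-- Inversion symmetry of `fchar`. -/
lemma fchar_inv (n : ℕ) (θ r : ℝ) (hr : 0 < r) :
    fchar n r⁻¹ θ * r ^ (2 * (n : ℝ) - 4) = - fchar n r θ := by
  have hr' : (0:ℝ) < r⁻¹ := inv_pos.2 hr
  have key : ∀ x y : ℝ, (r⁻¹) ^ x * r ^ y = r ^ (y - x) := by
    intro x y
    rw [Real.inv_rpow hr.le, ← Real.rpow_neg hr.le, ← Real.rpow_add hr]
    congr 1; ring
  have key2 : ∀ x y : ℝ, r ^ x * r ^ y = r ^ (x + y) := fun x y => (Real.rpow_add hr x y).symm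
  have k1 : (r⁻¹) ^ (2*(n:ℝ)-4) * r ^ (2*(n:ℝ)-4) = 1 := by
    rw [key, sub_self, Real.rpow_zero]
  have kinv : (r⁻¹) ^ ((n:ℝ)/2) * (r⁻¹) ^ ((n:ℝ)-4) = (r⁻¹) ^ ((n:ℝ)/2 + ((n:ℝ)-4)) :=
    (Real.rpow_add hr' _ _).symm
  have k2 : (r⁻¹) ^ ((n:ℝ)/2 + ((n:ℝ)-4)) * r ^ (2*(n:ℝ)-4) = r ^ ((n:ℝ)/2) := by
    rw [key]; congr 1; ring
  have k3 : (r⁻¹) ^ ((n:ℝ)/2) * r ^ (2*(n:ℝ)-4) = r ^ (3*(n:ℝ)/2-4) := by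
    rw [key]; congr 1; ring
  have k4 : (r⁻¹) ^ ((n:ℝ)) * r ^ (2*(n:ℝ)-4) = r ^ ((n:ℝ)-4) := by
    rw [key]; congr 1; ring
  have k5 : (r⁻¹) ^ ((n:ℝ)-4) * r ^ (2*(n:ℝ)-4) = r ^ ((n:ℝ)) := by
    rw [key]; congr 1; ring
  have k6 : r ^ ((n:ℝ)/2) * r ^ ((n:ℝ)-4) = r ^ (3*(n:ℝ)/2-4) := by
    rw [key2]; congr 1; ring
  set c := |Real.cos ((n : ℝ) * θ / 2)| with hc
  simp only [fchar, ← hc]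
  linear_combination k1 + 2*((n:ℝ)-1)*c*r^(2*(n:ℝ)-4)*kinv + 2*((n:ℝ)-1)*c*k2
    - 2*((n:ℝ)-1)*c*k3 - ((n:ℝ)-1)^2*k4 + ((n:ℝ)-1)^2*k5 + 2*((n:ℝ)-1)*c*k6

/-- Key analytic lemma about `Lp`. -/
lemma lp_key (n : ℕ) (hn : 5 ≤ n) (z : ℂ) (hz : z ≠ 0) :
    Lp n z ≠ 0 ∧
    (fchar n ‖z‖ (Complex.arg z) < 0 →
      1 / ‖z‖ < ‖Lp n z‖) ∧
    (0 < fchar n ‖z‖ (Complex.arg z) →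
      ‖Lp n z‖ < 1 / ‖z‖) := by
  have hn' : (5 : ℝ) ≤ (n : ℝ) := by exact_mod_cast hn
  set r := ‖z‖ with hrdef
  have hr : 0 < r := norm_pos_iff.mpr hz
  set θ := Complex.arg z with hθdef
  have hzn : z ^ n ≠ 0 := pow_ne_zero _ hz
  set w : ℂ := (z ^ n) ^ ((1 : ℂ) / 2) with hwdef
  have h12 : ((1 : ℂ) / 2) = ((2 : ℕ) : ℂ)⁻¹ := by norm_num
  have hw2 : w ^ 2 = z ^ n := by
    rw [hwdef, h12]
    exact Complex.cpow_nat_inv_pow _ two_ne_zero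
  have hw0 : w ≠ 0 := by
    intro h
    rw [h] at hw2
    simp at hw2
    exact hzn hw2.symm
  set ρ := r ^ ((n : ℝ) / 2) with hρdef
  have hρpos : 0 < ρ := Real.rpow_pos_of_pos hr _
  have habsw : ‖w‖ = ρ := by
    rw [hwdef, Complex.cpow_def_of_ne_zero hzn, Complex.norm_exp]
    have h1 : (Complex.log (z ^ n) * ((1:ℂ)/2)).re = Real.log (‖z ^ n‖) / 2 := by
      simp [Complex.mul_re, Complex.log_re]
      ring
    rw [h1, hρdef]
    rw [Real.rpow_def_of_pos hr]
    congr 1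
    rw [norm_pow, ← hrdef, Real.log_pow]
    push_cast
    ring
  have hre : w.re = ρ * Real.cos ((z ^ n).arg / 2) := by
    rw [hwdef, Complex.cpow_def_of_ne_zero hzn, Complex.exp_re]
    have h1 : (Complex.log (z ^ n) * ((1:ℂ)/2)).re = Real.log (‖z ^ n‖) / 2 := by
      simp [Complex.mul_re, Complex.log_re]
      ring
    have h2 : (Complex.log (z ^ n) * ((1:ℂ)/2)).im = (z ^ n).arg / 2 := by
      simp [Complex.mul_im, Complex.log_im]
      ring
    rw [h1, h2]
    congr 1
    rw [hρdef, Real.rpow_def_of_pos hr]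
    congr 1
    rw [norm_pow, ← hrdef, Real.log_pow]
    push_cast
    ring
  -- relate cos(arg(z^n)/2) to |cos(nθ/2)|
  have hcos : Real.cos ((z ^ n).arg / 2) = |Real.cos ((n : ℝ) * θ / 2)| := by
    have hnn : 0 ≤ Real.cos ((z ^ n).arg / 2) := by
      apply Real.cos_nonneg_of_mem_Icc
      constructor
      · have := Complex.neg_pi_lt_arg (z ^ n); linarith
      · have := Complex.arg_le_pi (z ^ n); linarith
    obtain ⟨k, hk⟩ : ∃ k : ℤ, (z ^ n).arg - (n : ℝ) * θ = 2 * π * k := by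
      rw [← Real.Angle.angle_eq_iff_two_pi_dvd_sub]
      rw [show ((n : ℝ) * θ) = (n • θ : ℝ) by simp [nsmul_eq_mul], Real.Angle.coe_nsmul]
      exact arg_pow_angle z hz n
    have harg : (z ^ n).arg / 2 = (n : ℝ) * θ / 2 + k * π := by
      linear_combination hk / 2
    rw [harg, Real.cos_add_int_mul_pi]
    have habs : |((-1:ℝ)) ^ k * Real.cos ((n:ℝ)*θ/2)| = |Real.cos ((n:ℝ)*θ/2)| := by
      rcases Int.even_or_odd k with hk2 | hk2
      · rw [hk2.neg_one_zpow, one_mul]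
      · rw [Odd.neg_one_zpow hk2, neg_one_mul, _root_.abs_neg]
    rw [harg, Real.cos_add_int_mul_pi] at hnn
    rw [← habs]
    exact (_root_.abs_of_nonneg hnn).symm
  set c := |Real.cos ((n : ℝ) * θ / 2)| with hcdef
  have hc0 : 0 ≤ c := abs_nonneg _
  set a := w.re with hadef
  set b := w.im with hbdef
  have hre2 : a = ρ * c := by rw [hre, hcos]
  have ha0 : 0 ≤ a := by rw [hre2]; positivity
  have hab : a ^ 2 + b ^ 2 = ρ ^ 2 := by
    have h := Complex.sq_norm w
    rw [habsw, Complex.normSq_apply] at h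
    linear_combination -h
  -- nonvanishing of numerator and denominator
  have hdre : (w + ((n:ℂ) - 1)).re = a + ((n:ℝ) - 1) := by
    simp [Complex.add_re, Complex.sub_re, hadef]
  have hd : w + ((n:ℂ) - 1) ≠ 0 := by
    intro h
    have := congrArg Complex.re h
    rw [hdre] at this
    simp at this
    linarith
  have hnumre : ((1 : ℂ) + ((n:ℂ) - 1) * w).re = 1 + ((n:ℝ) - 1) * a := by
    simp [Complex.add_re, Complex.mul_re, Complex.sub_re, Complex.sub_im, hadef]
  have hnum : (1 : ℂ) + ((n:ℂ) - 1) * w ≠ 0 := by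
    intro h
    have := congrArg Complex.re h
    rw [hnumre] at this
    simp at this
    nlinarith [mul_nonneg (show (0:ℝ) ≤ (n:ℝ)-1 by linarith) ha0]
  have hLp : Lp n z = z * ((1 : ℂ) + ((n:ℂ) - 1) * w) / (w * (w + ((n:ℂ) - 1))) := by
    simp only [Lp, ← hwdef]
    rw [div_eq_div_iff hd (mul_ne_zero hw0 hd)]
    field_simp
  have hLpne : Lp n z ≠ 0 := by
    rw [hLp]
    exact div_ne_zero (mul_ne_zero hz hnum) (mul_ne_zero hw0 hd)
  set N₁ := ‖(1 : ℂ) + ((n:ℂ) - 1) * w‖ with hN₁def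
  set N₂ := ‖w + ((n:ℂ) - 1)‖ with hN₂def
  have hN1pos : 0 < N₁ := norm_pos_iff.mpr hnum
  have hN2pos : 0 < N₂ := norm_pos_iff.mpr hd
  have hA : ‖Lp n z‖ = r * N₁ / (ρ * N₂) := by
    rw [hLp, norm_div, norm_mul, norm_mul, habsw, hrdef, hN₁def, hN₂def]
  have hN1 : N₁ ^ 2 = (1 + ((n:ℝ) - 1) * a) ^ 2 + (((n:ℝ) - 1) * b) ^ 2 := by
    rw [hN₁def, Complex.sq_norm, Complex.normSq_apply]
    simp [Complex.add_re, Complex.add_im, Complex.mul_re, Complex.mul_im,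
      Complex.sub_re, Complex.sub_im]
    ring
  have hN2 : N₂ ^ 2 = (a + ((n:ℝ) - 1)) ^ 2 + b ^ 2 := by
    rw [hN₂def, Complex.sq_norm, Complex.normSq_apply]
    simp [Complex.add_re, Complex.add_im, Complex.sub_re, Complex.sub_im]
    ring
  -- rpow identities
  have hρ2 : r ^ ((n:ℝ)) = ρ ^ 2 := by
    rw [hρdef, ← Real.rpow_natCast (r ^ ((n:ℝ)/2)) 2, ← Real.rpow_mul hr.le]
    congr 1
    push_cast
    ring
  have hρ4 : ρ ^ 4 = r ^ (2*(n:ℝ)) := by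
    rw [hρdef, ← Real.rpow_natCast (r ^ ((n:ℝ)/2)) 4, ← Real.rpow_mul hr.le]
    congr 1
    push_cast
    ring
  have h1 : r ^ (2*(n:ℝ)-4) * r ^ (4:ℕ) = ρ ^ 4 := by
    rw [← Real.rpow_natCast r 4, ← Real.rpow_add hr, hρ4]
    congr 1
    push_cast
    ring
  have h2 : r ^ ((n:ℝ)-4) * r ^ (4:ℕ) = ρ ^ 2 := by
    rw [← Real.rpow_natCast r 4, ← Real.rpow_add hr, ← hρ2]
    congr 1
    push_cast
    ring
  have hfr : fchar n r θ * r ^ (4:ℕ) =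
      ρ^4 + 2*((n:ℝ)-1)*c*ρ*(ρ^2 - r^4) - ((n:ℝ)-1)^2*ρ^2*r^4 + ((n:ℝ)-1)^2*ρ^2 - r^4 := by
    have hρdef' : r ^ ((n:ℝ)/2) = ρ := hρdef.symm
    simp only [fchar, ← hcdef]
    linear_combination h1 + (2*((n:ℝ)-1)*c*(r ^ ((n:ℝ)-4)-1)*r^4) * hρdef'
      + (2*((n:ℝ)-1)*c*ρ + ((n:ℝ)-1)^2) * h2 - ((n:ℝ)-1)^2*r^4 * hρ2
  have hG : r ^ (4:ℕ) * N₁ ^ 2 - ρ ^ 2 * N₂ ^ 2 = -(fchar n r θ * r ^ (4:ℕ)) := by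
    rw [hN1, hN2, hfr]
    linear_combination (((n:ℝ)-1)^2*r^4 - ρ^2) * hab + 2*((n:ℝ)-1)*(r^4-ρ^2) * hre2
  refine ⟨hLpne, ?_, ?_⟩
  · intro hf
    have hf4 : 0 < -(fchar n r θ * r ^ (4:ℕ)) := by
      have heq : -(fchar n r θ * r ^ (4:ℕ)) = (-fchar n r θ) * r ^ (4:ℕ) := by ring
      rw [heq]
      exact mul_pos (neg_pos.mpr hf) (pow_pos hr 4)
    have hpos : ρ ^ 2 * N₂ ^ 2 < r ^ (4:ℕ) * N₁ ^ 2 := by linarith [hG]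
    have hsq : (ρ * N₂) ^ 2 < (r ^ 2 * N₁) ^ 2 := by
      have e1 : (ρ * N₂) ^ 2 = ρ ^ 2 * N₂ ^ 2 := by ring
      have e2 : (r ^ 2 * N₁) ^ 2 = r ^ (4:ℕ) * N₁ ^ 2 := by ring
      rw [e1, e2]; exact hpos
    have hlt : ρ * N₂ < r ^ 2 * N₁ := lt_of_pow_lt_pow_left₀ 2 (by positivity) hsq
    rw [hA, div_lt_div_iff₀ hr (mul_pos hρpos hN2pos)]
    have e3 : r * N₁ * r = r ^ 2 * N₁ := by ring
    rw [one_mul, e3]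
    exact hlt
  · intro hf
    have hf4 : 0 < fchar n r θ * r ^ (4:ℕ) := mul_pos hf (pow_pos hr 4)
    have hpos : r ^ (4:ℕ) * N₁ ^ 2 < ρ ^ 2 * N₂ ^ 2 := by linarith [hG]
    have hsq : (r ^ 2 * N₁) ^ 2 < (ρ * N₂) ^ 2 := by
      have e1 : (ρ * N₂) ^ 2 = ρ ^ 2 * N₂ ^ 2 := by ring
      have e2 : (r ^ 2 * N₁) ^ 2 = r ^ (4:ℕ) * N₁ ^ 2 := by ring
      rw [e1, e2]; exact hpos
    have hlt : r ^ 2 * N₁ < ρ * N₂ := lt_of_pow_lt_pow_left₀ 2 (by positivity) hsq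
    rw [hA, div_lt_div_iff₀ (mul_pos hρpos hN2pos) hr]
    have e3 : r * N₁ * r = r ^ 2 * N₁ := by ring
    rw [one_mul, e3]
    exact hlt

theorem stmt15 (n : ℕ) (hn : 5 ≤ n) (rD : ℝ → ℝ)
    (hrD : ∀ θ : ℝ, 0 < rD θ ∧ rD θ < 1 ∧ fchar n (rD θ) θ = 0 ∧
      ∀ r : ℝ, 0 < r → r < 1 → fchar n r θ = 0 → r = rD θ)
    (s₀ : ℝ) (hs₀ : IsLeast (Set.range rD) s₀) (z : ℂ) (hz : z ≠ 0) :
    (‖z‖ < s₀ → 1 / s₀ < ‖Lp n z‖) ∧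
    (1 / s₀ < ‖z‖ → 0 < ‖Lp n z‖ ∧ ‖Lp n z‖ < s₀) := by
  obtain ⟨⟨θ₀, hθ₀⟩, hlb⟩ := hs₀
  have hs0pos : 0 < s₀ := hθ₀ ▸ (hrD θ₀).1
  have hr0 : 0 < ‖z‖ := norm_pos_iff.mpr hz
  have hsle : s₀ ≤ rD (Complex.arg z) := hlb (Set.mem_range_self _)
  obtain ⟨hp, h1', hz', hu⟩ := hrD (Complex.arg z)
  obtain ⟨hne, hkey1, hkey2⟩ := lp_key n hn z hz
  constructor
  · intro h
    have hlt : ‖z‖ < rD (Complex.arg z) := lt_of_lt_of_le h hsle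
    have hfneg := fchar_neg n hn (Complex.arg z) (rD (Complex.arg z)) hp h1' hz' hu
      ‖z‖ hr0 hlt
    have h2 := hkey1 hfneg
    have h3 : 1 / s₀ < 1 / ‖z‖ := by
      apply one_div_lt_one_div_of_lt hr0 h
    linarith
  · intro h
    have hinv : 1 / ‖z‖ < s₀ := by
      rw [div_lt_iff₀ hr0]
      rw [div_lt_iff₀ hs0pos] at h
      nlinarith
    have hinvlt : ‖z‖⁻¹ < rD (Complex.arg z) := by
      rw [← one_div]
      linarith
    have hfneg := fchar_neg n hn (Complex.arg z) (rD (Complex.arg z)) hp h1' hz' hu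
      ‖z‖⁻¹ (inv_pos.2 hr0) hinvlt
    have hfpos : 0 < fchar n ‖z‖ (Complex.arg z) := by
      have hsym := fchar_inv n (Complex.arg z) ‖z‖ hr0
      have hrp : 0 < ‖z‖ ^ (2*(n:ℝ)-4) := Real.rpow_pos_of_pos hr0 _
      nlinarith
    have h2 := hkey2 hfpos
    exact ⟨norm_pos_iff.mpr hne, by linarith⟩
end

section
/- Let n ≥ 5 and s₀ as above. For every z with 0 < |z| < s₀, the even iterates L_p^{2k}(z) converge to 0 and the odd iterates L_p^{2k+1}(z) tend to ∞ (i.e., |L_p^{2k+1}(z)| → ∞); hence D_{s₀} ∪ E_{s₀} lies in the basin of attraction of the two-cycle {0, ∞}. -/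
open Complex Real Filter

lemma re_cpow_half_nonneg (z : ℂ) : 0 ≤ (z ^ ((1:ℂ)/2)).re := by
  rcases eq_or_ne z 0 with h | h
  · simp [h, Complex.zero_cpow (by norm_num : (1:ℂ)/2 ≠ 0)]
  · rw [Complex.cpow_def_of_ne_zero h, Complex.exp_re]
    apply mul_nonneg (Real.exp_nonneg _)
    have h1 : (Complex.log z * ((1:ℂ)/2)).im = Complex.arg z / 2 := by
      simp [Complex.mul_im, Complex.log_im]; ring
    rw [h1]
    apply Real.cos_nonneg_of_mem_Icc
    exact ⟨by linarith [Complex.neg_pi_lt_arg z], by linarith [Complex.arg_le_pi z]⟩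

lemma sq_cpow_half (z : ℂ) (h : z ≠ 0) : (z ^ ((1:ℂ)/2))^2 = z := by
  rw [sq, ← Complex.cpow_add _ _ h]; norm_num

lemma abs_Lp (n : ℕ) (z : ℂ) : ‖Lp n z‖ =
    ‖z‖ * ‖((z ^ n) ^ ((1:ℂ)/2))⁻¹ + ((n : ℂ) - 1)‖ /
      ‖(z ^ n) ^ ((1:ℂ)/2) + ((n : ℂ) - 1)‖ := by
  unfold Lp; rw [norm_div, norm_mul]

lemma keyD (n : ℕ) (hn : 5 ≤ n) (s₀ : ℝ) (hs₀pos : 0 < s₀) (hs₀lt : s₀ < 1)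
    (hmap : ∀ z : ℂ, z ≠ 0 →
      (‖z‖ < s₀ → 1 / ‖z‖ < ‖Lp n z‖ ∧ 1 / s₀ < ‖Lp n z‖) ∧
      (1 / s₀ < ‖z‖ → ‖Lp n z‖ < 1 / ‖z‖ ∧
        0 < ‖Lp n z‖ ∧ ‖Lp n z‖ < s₀))
    (z : ℂ) (hz : z ≠ 0) (hzs : ‖z‖ < s₀) :
    Filter.Tendsto (fun k : ℕ => (Lp n)^[2 * k] z) Filter.atTop (nhds 0) ∧
      Filter.Tendsto (fun k : ℕ => ‖(Lp n)^[2 * k + 1] z‖) Filter.atTop Filter.atTop := by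
  set L := Lp n with hLdef
  set Z : ℕ → ℂ := fun k => L^[2*k] z with hZdef
  have hstep : ∀ k, Z (k+1) = L (L (Z k)) := by
    intro k
    have h2 : 2*(k+1) = (2*k + 1) + 1 := by ring
    simp only [hZdef, h2, Function.iterate_succ_apply']
  -- invariant
  have hinv : ∀ k, Z k ≠ 0 ∧ ‖Z k‖ < s₀ := by
    intro k
    induction k with
    | zero => simpa [hZdef] using ⟨hz, hzs⟩
    | succ k ih =>
      obtain ⟨h0, hlt⟩ := ih
      obtain ⟨hb, hb'⟩ := (hmap (Z k) h0).1 hlt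
      have hLpos : 0 < ‖L (Z k)‖ := lt_trans (by positivity) hb'
      have hLne : L (Z k) ≠ 0 := norm_pos_iff.mp hLpos
      obtain ⟨-, hpos, hlt'⟩ := (hmap (L (Z k)) hLne).2 hb'
      rw [hstep k]
      exact ⟨norm_pos_iff.mp hpos, hlt'⟩
  set a : ℕ → ℝ := fun k => ‖Z k‖ with hadef
  set b : ℕ → ℝ := fun k => ‖L (Z k)‖ with hbdef
  have ha_pos : ∀ k, 0 < a k := fun k => norm_pos_iff.mpr (hinv k).1
  have hb1 : ∀ k, 1 / a k < b k := fun k => ((hmap (Z k) (hinv k).1).1 (hinv k).2).1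
  have hbs : ∀ k, 1 / s₀ < b k := fun k => ((hmap (Z k) (hinv k).1).1 (hinv k).2).2
  have hb_pos : ∀ k, 0 < b k := fun k => lt_trans (by positivity) (hbs k)
  have hLne : ∀ k, L (Z k) ≠ 0 := fun k => norm_pos_iff.mp (hb_pos k)
  have ha2 : ∀ k, a (k+1) < 1 / b k := by
    intro k
    have h := ((hmap (L (Z k)) (hLne k)).2 (hbs k)).1
    show ‖Z (k+1)‖ < 1 / b k
    rw [hstep k]; exact h
  have hdec : ∀ k, a (k+1) < a k := by
    intro k
    have h1 : 1 < b k * a k := (div_lt_iff₀ (ha_pos k)).mp (hb1 k)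
    have h2 : 1 / b k < a k := (div_lt_iff₀ (hb_pos k)).mpr (by nlinarith)
    exact lt_trans (ha2 k) h2
  have hb2 : ∀ k, b k < 1 / a (k+1) := by
    intro k
    have h1 : a (k+1) * b k < 1 := (lt_div_iff₀ (hb_pos k)).mp (ha2 k)
    exact (lt_div_iff₀ (ha_pos (k+1))).mpr (by nlinarith)
  have hbdd : BddBelow (Set.range a) := ⟨0, by rintro x ⟨k, rfl⟩; exact (ha_pos k).le⟩
  have hanti : Antitone a := antitone_nat_of_succ_le fun k => (hdec k).le
  have haA : Tendsto a atTop (nhds (⨅ k, a k)) := tendsto_atTop_ciInf hanti hbdd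
  set A := ⨅ k, a k with hAdef
  have hA0 : 0 ≤ A := le_ciInf fun k => (ha_pos k).le
  have hAeq : A = 0 := by
    by_contra hA
    have hApos : 0 < A := lt_of_le_of_ne hA0 (Ne.symm hA)
    have hAle : ∀ k, A ≤ a k := fun k => ciInf_le hbdd k
    -- b tends to A⁻¹
    have hbA : Tendsto b atTop (nhds A⁻¹) := by
      have h1 : Tendsto (fun k => (a k)⁻¹) atTop (nhds A⁻¹) := haA.inv₀ hApos.ne'
      have h2 : Tendsto (fun k => (a (k+1))⁻¹) atTop (nhds A⁻¹) :=
        ((tendsto_add_atTop_iff_nat 1).mpr haA).inv₀ hApos.ne'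
      refine tendsto_of_tendsto_of_tendsto_of_le_of_le h1 h2 (fun k => ?_) (fun k => ?_)
      · have := hb1 k; rw [one_div] at this; exact this.le
      · have := hb2 k; rw [one_div] at this; exact this.le
    -- subsequences
    have hZball : ∀ k, Z k ∈ Metric.closedBall (0:ℂ) 1 := by
      intro k
      rw [Metric.mem_closedBall, dist_zero_right]
      exact le_of_lt (lt_trans (hinv k).2 hs₀lt)
    obtain ⟨w, -, φ, hφ, hZw⟩ := (isCompact_closedBall (0:ℂ) 1).tendsto_subseq hZball
    set U : ℕ → ℂ := fun j => ((Z (φ j)) ^ n) ^ ((1:ℂ)/2) with hUdef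
    have hZφne : ∀ j, (Z (φ j)) ^ n ≠ 0 := fun j => pow_ne_zero n (hinv (φ j)).1
    have hUball : ∀ j, U j ∈ Metric.closedBall (0:ℂ) 1 := by
      intro j
      rw [Metric.mem_closedBall, dist_zero_right]
      show ‖((Z (φ j)) ^ n) ^ ((1:ℂ)/2)‖ ≤ 1
      rw [Complex.norm_cpow_of_ne_zero (hZφne j)]
      have h1 : ((1:ℂ)/2).re = (1/2 : ℝ) := by norm_num
      have h2 : ((1:ℂ)/2).im = 0 := by norm_num
      rw [h1, h2, mul_zero, Real.exp_zero, div_one]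
      have hle : ‖(Z (φ j)) ^ n‖ ≤ 1 := by
        rw [norm_pow]
        exact pow_le_one₀ (norm_nonneg _) (lt_trans (hinv (φ j)).2 hs₀lt).le
      calc ‖(Z (φ j)) ^ n‖ ^ ((1:ℝ)/2) ≤ 1 ^ ((1:ℝ)/2) :=
            Real.rpow_le_rpow (norm_nonneg _) hle (by norm_num)
        _ = 1 := Real.one_rpow _
    obtain ⟨u, -, ψ, hψ, hUu⟩ := (isCompact_closedBall (0:ℂ) 1).tendsto_subseq hUball
    set σ : ℕ → ℕ := φ ∘ ψ with hσdef
    have hσ : StrictMono σ := hφ.comp hψ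
    have hZw' : Tendsto (fun j => Z (σ j)) atTop (nhds w) := hZw.comp hψ.tendsto_atTop
    have haσ : Tendsto (fun j => a (σ j)) atTop (nhds A) := haA.comp hσ.tendsto_atTop
    have habsZ : Tendsto (fun j => ‖Z (σ j)‖) atTop (nhds (‖w‖)) :=
      (continuous_norm.tendsto w).comp hZw'
    have hwA : ‖w‖ = A := tendsto_nhds_unique habsZ haσ
    have hwne : w ≠ 0 := norm_pos_iff.mp (hwA ▸ hApos)
    -- u^2 = w^n
    have hUψ : Tendsto (fun j => U (ψ j)) atTop (nhds u) := hUu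
    have hu2 : u ^ 2 = w ^ n := by
      have t1 : Tendsto (fun j => (U (ψ j)) ^ 2) atTop (nhds (u ^ 2)) := hUψ.pow 2
      have t2 : Tendsto (fun j => (Z (σ j)) ^ n) atTop (nhds (w ^ n)) := hZw'.pow n
      have heq : ∀ j, (U (ψ j)) ^ 2 = (Z (σ j)) ^ n := fun j => sq_cpow_half _ (hZφne (ψ j))
      exact tendsto_nhds_unique t1 (by simpa only [heq] using t2)
    have hwn : w ^ n ≠ 0 := pow_ne_zero n hwne
    have hune : u ≠ 0 := fun h => hwn (by rw [← hu2, h]; ring)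
    have hure : 0 ≤ u.re := by
      have : Tendsto (fun j => (U (ψ j)).re) atTop (nhds u.re) :=
        (Complex.continuous_re.tendsto u).comp hUψ
      exact ge_of_tendsto this (Eventually.of_forall fun j => re_cpow_half_nonneg _)
    set v : ℂ := (w ^ n) ^ ((1:ℂ)/2) with hvdef
    have hv2 : v ^ 2 = w ^ n := sq_cpow_half _ hwn
    have hvre : 0 ≤ v.re := re_cpow_half_nonneg _
    set c : ℂ := (n : ℂ) - 1 with hcdef
    have hcre : c.re = (n : ℝ) - 1 := by simp [hcdef]
    have hcim : c.im = 0 := by simp [hcdef]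
    have hn4 : (4 : ℝ) ≤ (n : ℝ) - 1 := by
      have : (5:ℝ) ≤ (n:ℝ) := by exact_mod_cast hn
      linarith
    -- u = v or u = conj v with v.re = 0 ; in both cases the abs values agree
    have hcases : u = v ∨ u = -v := by
      have h : (u - v) * (u + v) = 0 := by linear_combination hu2 - hv2
      rcases mul_eq_zero.mp h with h | h
      · exact Or.inl (sub_eq_zero.mp h)
      · exact Or.inr (eq_neg_of_add_eq_zero_left h)
    have hkey : ‖u⁻¹ + c‖ = ‖v⁻¹ + c‖ ∧
        ‖u + c‖ = ‖v + c‖ := by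
      rcases hcases with h | h
      · rw [h]; exact ⟨rfl, rfl⟩
      · have hvre0 : v.re = 0 := by
          have : 0 ≤ -v.re := by rw [h] at hure; simpa using hure
          linarith
        have hconj : u = (starRingEnd ℂ) v := by
          rw [h]
          apply Complex.ext <;> simp [hvre0]
        have hcconj : (starRingEnd ℂ) c = c := by
          rw [hcdef]; simp
        constructor
        · have h' : u⁻¹ + c = (starRingEnd ℂ) (v⁻¹ + c) := by
            rw [map_add, map_inv₀, hcconj, ← hconj]
          rw [h', Complex.norm_conj]
        · have h' : u + c = (starRingEnd ℂ) (v + c) := by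
            rw [map_add, hcconj, ← hconj]
          rw [h', Complex.norm_conj]
    -- denominator nonzero
    have hucne : u + c ≠ 0 := by
      intro h
      have : u.re = -c.re := by
        have := congrArg Complex.re h
        simp [Complex.add_re] at this
        linarith [this]
      rw [hcre] at this
      rw [this] at hure
      linarith
    have habsuc : ‖u + c‖ ≠ 0 := norm_ne_zero_iff.mpr hucne
    -- limit of b along σ
    have hbσ : Tendsto (fun j => b (σ j)) atTop (nhds A⁻¹) := hbA.comp hσ.tendsto_atTop
    have hbform : ∀ j, b (σ j) =
        ‖Z (σ j)‖ * ‖(U (ψ j))⁻¹ + c‖ / ‖U (ψ j) + c‖ := by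
      intro j
      rw [hbdef]
      exact abs_Lp n (Z (σ j))
    have hT2 : Tendsto (fun j => ‖(U (ψ j))⁻¹ + c‖) atTop
        (nhds (‖u⁻¹ + c‖)) :=
      (continuous_norm.tendsto _).comp ((hUψ.inv₀ hune).add tendsto_const_nhds)
    have hT3 : Tendsto (fun j => ‖U (ψ j) + c‖) atTop
        (nhds (‖u + c‖)) :=
      (continuous_norm.tendsto _).comp (hUψ.add tendsto_const_nhds)
    have hblim : Tendsto (fun j => b (σ j)) atTop
        (nhds (‖w‖ * ‖u⁻¹ + c‖ / ‖u + c‖)) := by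
      simp only [hbform]
      exact (habsZ.mul hT2).div hT3 habsuc
    have hAeq2 : A⁻¹ = ‖w‖ * ‖u⁻¹ + c‖ / ‖u + c‖ :=
      tendsto_nhds_unique hbσ hblim
    -- hmap at w
    have hws : ‖w‖ < s₀ := by
      rw [hwA]
      exact lt_of_le_of_lt (hAle 0) (hinv 0).2
    have hmapw := ((hmap w hwne).1 hws).1
    have hLpw : ‖Lp n w‖ = ‖w‖ * ‖v⁻¹ + c‖ / ‖v + c‖ := by
      rw [abs_Lp n w]
    rw [hLpw, ← hkey.1, ← hkey.2, ← hAeq2, hwA, one_div] at hmapw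
    exact lt_irrefl _ hmapw
  have haze : Tendsto a atTop (nhds 0) := hAeq ▸ haA
  constructor
  · rw [tendsto_zero_iff_norm_tendsto_zero]
    simpa only using haze
  · have hodd : ∀ k, ‖L^[2*k+1] z‖ = b k := by
      intro k
      rw [Function.iterate_succ_apply']
    have hainv : Tendsto (fun k => (a k)⁻¹) atTop atTop := by
      apply Filter.Tendsto.inv_tendsto_nhdsGT_zero
      exact tendsto_nhdsWithin_of_tendsto_nhds_of_eventually_within _ haze
        (Eventually.of_forall fun k => Set.mem_Ioi.mpr (ha_pos k))
    have : Tendsto b atTop atTop := by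
      apply tendsto_atTop_mono _ hainv
      intro k
      have := hb1 k; rw [one_div] at this; exact this.le
    simpa only [hodd] using this


theorem stmt16 (n : ℕ) (hn : 5 ≤ n) (s₀ : ℝ) (hs₀pos : 0 < s₀) (hs₀lt : s₀ < 1)
    (hmap : ∀ z : ℂ, z ≠ 0 →
      (‖z‖ < s₀ → 1 / ‖z‖ < ‖Lp n z‖ ∧ 1 / s₀ < ‖Lp n z‖) ∧
      (1 / s₀ < ‖z‖ → ‖Lp n z‖ < 1 / ‖z‖ ∧
        0 < ‖Lp n z‖ ∧ ‖Lp n z‖ < s₀)) :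
    ∀ z : ℂ, z ≠ 0 →
      (‖z‖ < s₀ →
        Filter.Tendsto (fun k : ℕ => (Lp n)^[2 * k] z) Filter.atTop (nhds 0) ∧
        Filter.Tendsto (fun k : ℕ => ‖(Lp n)^[2 * k + 1] z‖) Filter.atTop Filter.atTop) ∧
      (1 / s₀ < ‖z‖ →
        Filter.Tendsto (fun k : ℕ => ‖(Lp n)^[2 * k] z‖) Filter.atTop Filter.atTop ∧
        Filter.Tendsto (fun k : ℕ => (Lp n)^[2 * k + 1] z) Filter.atTop (nhds 0)) := by
  intro z hz
  constructor
  · intro hzs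
    exact keyD n hn s₀ hs₀pos hs₀lt hmap z hz hzs
  · intro hzE
    obtain ⟨-, hpos, hlt⟩ := (hmap z hz).2 hzE
    set z' : ℂ := Lp n z with hz'def
    have hz'ne : z' ≠ 0 := norm_pos_iff.mp hpos
    obtain ⟨T0, T1⟩ := keyD n hn s₀ hs₀pos hs₀lt hmap z' hz'ne hlt
    constructor
    · apply (tendsto_add_atTop_iff_nat 1).mp
      have heq : ∀ k : ℕ, ‖(Lp n)^[2 * (k + 1)] z‖ =
          ‖(Lp n)^[2 * k + 1] z'‖ := by
        intro k
        have h2 : 2 * (k + 1) = (2 * k + 1) + 1 := by ring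
        rw [h2, Function.iterate_succ_apply]
      simpa only [heq] using T1
    · have heq : ∀ k : ℕ, (Lp n)^[2 * k + 1] z = (Lp n)^[2 * k] z' := by
        intro k
        rw [Function.iterate_succ_apply]
      simpa only [heq] using T0
end

section
/- For n ≥ 5, let r₀ = r_D(0) be the positive zero of f_n(·, 0) that is less than 1. Then for each k the pair {r₀ e^{2kπi/n}, (1/r₀) e^{2kπi/n}} is a two-cycle of the Laguerre iteration function: L_p(r₀ e^{2kπi/n}) = (1/r₀) e^{2kπi/n} and L_p((1/r₀) e^{2kπi/n}) = r₀ e^{2kπi/n}. -/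
open Complex Real Filter

lemma key_lemma (n : ℕ) (hn : 5 ≤ n) (r : ℝ) (hr : 0 < r) (hf : fchar n r 0 = 0) :
    r ^ ((n : ℝ) / 2) * (r ^ ((n : ℝ) / 2) + ((n : ℝ) - 1))
      = r ^ 2 * (1 + ((n : ℝ) - 1) * r ^ ((n : ℝ) / 2)) := by
  have hn5 : (5 : ℝ) ≤ (n : ℝ) := by exact_mod_cast hn
  have hc : (0 : ℝ) < (n : ℝ) - 1 := by linarith
  have hr4 : (0 : ℝ) < r ^ 4 := by positivity
  set s := r ^ ((n : ℝ) / 2) with hs_def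
  set x := r ^ ((n : ℝ)) with hx_def
  have hs : 0 < s := Real.rpow_pos_of_pos hr _
  have hx : s * s = x := by
    rw [hs_def, hx_def, ← Real.rpow_add hr]
    norm_num
  have e4 : r ^ ((4 : ℝ)) = r ^ 4 := by
    rw [show ((4:ℝ)) = ((4:ℕ):ℝ) by norm_num, Real.rpow_natCast]
  have e1 : r ^ (2 * (n : ℝ) - 4) * r ^ 4 = x * x := by
    rw [← e4, ← Real.rpow_add hr, hx_def, ← Real.rpow_add hr]
    congr 1; ring
  have e2 : r ^ ((n : ℝ) - 4) * r ^ 4 = x := by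
    rw [← e4, ← Real.rpow_add hr, hx_def]
    congr 1; ring
  unfold fchar at hf
  rw [mul_zero, zero_div, Real.cos_zero, abs_one] at hf
  rw [← hs_def, ← hx_def] at hf
  set c := (n : ℝ) - 1 with hc_def
  have hfac : (s * (s + c) - r ^ 2 * (1 + c * s)) * (s * (s + c) + r ^ 2 * (1 + c * s)) = 0 := by
    have h4 := congrArg (· * r ^ 4) hf
    simp only [zero_mul] at h4
    linear_combination h4 - e1 - (2 * c * s + c ^ 2) * e2
      + (s * s + x + 2 * c * s + c ^ 2 - c ^ 2 * r ^ 4) * hx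
  have hpos : 0 < s * (s + c) + r ^ 2 * (1 + c * s) := by
    have h1 : 0 < s * (s + c) := mul_pos hs (by linarith)
    have h2 : 0 < r ^ 2 * (1 + c * s) :=
      mul_pos (pow_pos hr 2) (by nlinarith [mul_pos hc hs])
    linarith
  rcases mul_eq_zero.mp hfac with h | h
  · linarith [sub_eq_zero.mp h]
  · linarith

lemma Lp_eval (n : ℕ) (hn : 5 ≤ n) (r r' : ℝ) (hr : 0 < r) (hr' : 0 < r') (k : ℤ)
    (hkey : r * (1 + ((n : ℝ) - 1) * r ^ ((n : ℝ) / 2))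
      = r' * (r ^ ((n : ℝ) / 2) * (r ^ ((n : ℝ) / 2) + ((n : ℝ) - 1)))) :
    Lp n ((r : ℂ) * Complex.exp (2 * k * Real.pi * Complex.I / n))
      = (r' : ℂ) * Complex.exp (2 * k * Real.pi * Complex.I / n) := by
  have hn0 : (n : ℂ) ≠ 0 := by
    exact_mod_cast Nat.cast_ne_zero.mpr (by omega)
  have hn5 : (5 : ℝ) ≤ (n : ℝ) := by exact_mod_cast hn
  set ω := Complex.exp (2 * k * Real.pi * Complex.I / n) with hω_def
  have hω0 : ω ≠ 0 := Complex.exp_ne_zero _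
  have harg : (n : ℂ) * (2 * k * Real.pi * Complex.I / n) = k * (2 * Real.pi * Complex.I) := by
    field_simp
  have hωn : ω ^ n = 1 := by
    rw [hω_def, ← Complex.exp_nat_mul, harg]
    exact Complex.exp_int_mul_two_pi_mul_I k
  set s := r ^ ((n : ℝ) / 2) with hs_def
  have hs : 0 < s := Real.rpow_pos_of_pos hr _
  have hz : ((r : ℂ) * ω) ^ n = ((r ^ n : ℝ) : ℂ) := by
    rw [mul_pow, hωn, mul_one]; push_cast; ring
  have hcpow : (((r : ℂ) * ω) ^ n) ^ ((1 : ℂ) / 2) = (s : ℂ) := by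
    rw [hz, show ((1 : ℂ) / 2) = (((1 / 2 : ℝ) : ℂ)) by norm_num,
      ← Complex.ofReal_cpow (le_of_lt (pow_pos hr n))]
    congr 1
    rw [hs_def, ← Real.rpow_natCast r n, ← Real.rpow_mul hr.le]
    congr 1; ring
  have hsc : (0 : ℝ) < s + ((n : ℝ) - 1) := by linarith
  have hden : (s : ℂ) + ((n : ℂ) - 1) ≠ 0 := by
    have : ((s + ((n : ℝ) - 1) : ℝ) : ℂ) ≠ 0 := by
      exact_mod_cast ne_of_gt hsc
    push_cast at this
    convert this using 1
  have hsC : (s : ℂ) ≠ 0 := by exact_mod_cast ne_of_gt hs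
  have hrC : (r : ℂ) ≠ 0 := by exact_mod_cast ne_of_gt hr
  have hkeyC : (r : ℂ) * (1 + ((n : ℂ) - 1) * (s : ℂ))
      = (r' : ℂ) * ((s : ℂ) * ((s : ℂ) + ((n : ℂ) - 1))) := by
    have := congrArg (Complex.ofReal) hkey
    push_cast at this
    convert this using 2
  unfold Lp
  rw [hcpow]
  rw [div_eq_iff hden]
  field_simp
  linear_combination hkeyC

theorem stmt17 (n : ℕ) (hn : 5 ≤ n) (r₀ : ℝ)
    (hr₀ : 0 < r₀ ∧ r₀ < 1 ∧ fchar n r₀ 0 = 0 ∧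
      ∀ r : ℝ, 0 < r → r < 1 → fchar n r 0 = 0 → r = r₀) (k : ℤ) :
    Lp n ((r₀ : ℂ) * Complex.exp (2 * k * Real.pi * Complex.I / n))
        = (1 / (r₀ : ℂ)) * Complex.exp (2 * k * Real.pi * Complex.I / n) ∧
    Lp n ((1 / (r₀ : ℂ)) * Complex.exp (2 * k * Real.pi * Complex.I / n))
        = (r₀ : ℂ) * Complex.exp (2 * k * Real.pi * Complex.I / n) := by
  obtain ⟨hr, hr1, hf, -⟩ := hr₀
  have hkey := key_lemma n hn r₀ hr hf
  set s := r₀ ^ ((n : ℝ) / 2) with hs_def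
  have hs : 0 < s := Real.rpow_pos_of_pos hr _
  have hn5 : (5 : ℝ) ≤ (n : ℝ) := by exact_mod_cast hn
  have hinv : 0 < 1 / r₀ := by positivity
  have hinvs : (1 / r₀) ^ ((n : ℝ) / 2) = 1 / s := by
    rw [hs_def, one_div, one_div, Real.inv_rpow hr.le]
  have hcast : ((1 / r₀ : ℝ) : ℂ) = 1 / (r₀ : ℂ) := by push_cast; ring
  constructor
  · rw [← hcast]
    apply Lp_eval n hn r₀ (1 / r₀) hr hinv k
    rw [← hs_def]
    field_simp
    nlinarith [hkey]
  · rw [← hcast]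
    apply Lp_eval n hn (1 / r₀) r₀ hinv hr k
    rw [hinvs]
    field_simp
    nlinarith [hkey]
end

section
/- Let n ≥ 5 and r₀ = r_D(0) as above. For every real r with 0 < r < r₀ or r > 1/r₀, the Laguerre iterates of r (a positive real) converge to the two-cycle {0, ∞}: L_p^{2k}(r) → 0 (or → ∞) and L_p^{2k+1}(r) → ∞ (or → 0) as k → ∞. -/
open Complex Real Filter

noncomputable def gr (n : ℕ) (t : ℝ) : ℝ :=
  t * (((t ^ n) ^ ((1:ℝ)/2))⁻¹ + ((n : ℝ) - 1)) / ((t ^ n) ^ ((1:ℝ)/2) + ((n : ℝ) - 1))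

noncomputable def Av (n : ℕ) (t : ℝ) : ℝ := (t ^ n) ^ ((1:ℝ)/2)

lemma Av_pos {n : ℕ} {t : ℝ} (ht : 0 < t) : 0 < Av n t :=
  Real.rpow_pos_of_pos (pow_pos ht n) _

lemma Av_eq {n : ℕ} {t : ℝ} (ht : 0 < t) : Av n t = t ^ ((n:ℝ)/2) := by
  rw [Av, ← Real.rpow_natCast t n, ← Real.rpow_mul ht.le, mul_one_div]

lemma Av_sq {n : ℕ} {t : ℝ} (ht : 0 < t) : (Av n t) ^ 2 = t ^ n := by
  rw [Av, ← Real.rpow_natCast ((t ^ n) ^ ((1:ℝ)/2)) 2, ← Real.rpow_mul (pow_nonneg ht.le n)]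
  norm_num

lemma gr_pos {n : ℕ} {t : ℝ} (hn : 5 ≤ n) (ht : 0 < t) : 0 < gr n t := by
  have hA := Av_pos (n := n) ht
  have hc : (4:ℝ) ≤ (n:ℝ) - 1 := by
    have : (5:ℝ) ≤ (n:ℝ) := by exact_mod_cast hn
    linarith
  have h2 : 0 < Av n t + ((n:ℝ) - 1) := by positivity
  have h1 : 0 < (Av n t)⁻¹ + ((n:ℝ) - 1) := by positivity
  exact div_pos (mul_pos ht h1) h2

lemma gr_inv {n : ℕ} {t : ℝ} (hn : 5 ≤ n) (ht : 0 < t) : gr n t⁻¹ = (gr n t)⁻¹ := by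
  have hA := Av_pos (n := n) ht
  have hc : (4:ℝ) ≤ (n:ℝ) - 1 := by
    have : (5:ℝ) ≤ (n:ℝ) := by exact_mod_cast hn
    linarith
  have hAi : Av n t⁻¹ = (Av n t)⁻¹ := by
    rw [Av, Av, inv_pow, Real.inv_rpow (pow_nonneg ht.le n)]
  show t⁻¹ * ((Av n t⁻¹)⁻¹ + _) / (Av n t⁻¹ + _) = (t * ((Av n t)⁻¹ + _) / (Av n t + _))⁻¹
  rw [hAi, inv_inv]
  have h1 : (Av n t)⁻¹ + ((n:ℝ) - 1) ≠ 0 := by positivity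
  have h2 : Av n t + ((n:ℝ) - 1) ≠ 0 := by positivity
  field_simp

noncomputable def phi (n : ℕ) (t : ℝ) : ℝ :=
  Av n t * (Av n t + ((n:ℝ) - 1)) - t ^ 2 * (((n:ℝ) - 1) * Av n t + 1)

lemma fchar_factor {n : ℕ} {t : ℝ} (ht : 0 < t) :
    fchar n t 0 * t ^ 4 =
      phi n t * (Av n t * (Av n t + ((n:ℝ) - 1)) + t ^ 2 * (((n:ℝ) - 1) * Av n t + 1)) := by
  have h2 : t ^ ((n:ℝ)/2) = Av n t := (Av_eq ht).symm
  have h4 : t ^ ((n:ℝ)) = (Av n t) ^ 2 := by rw [Av_sq ht, Real.rpow_natCast]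
  have ht4 : t ^ ((4:ℕ):ℝ) = t ^ (4:ℕ) := Real.rpow_natCast t 4
  have h1 : t ^ (2 * (n:ℝ) - 4) = (Av n t) ^ 4 / t ^ 4 := by
    rw [show 2 * (n:ℝ) - 4 = ((n:ℝ) + (n:ℝ)) - ((4:ℕ):ℝ) by push_cast; ring,
      Real.rpow_sub ht, Real.rpow_add ht, h4, ht4]
    ring
  have h3 : t ^ ((n:ℝ) - 4) = (Av n t) ^ 2 / t ^ 4 := by
    rw [show (n:ℝ) - 4 = (n:ℝ) - ((4:ℕ):ℝ) by push_cast; ring, Real.rpow_sub ht, h4, ht4]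
  rw [fchar, phi, h1, h2, h3, h4]
  rw [show (n:ℝ) * 0 / 2 = 0 by ring, Real.cos_zero, abs_one]
  field_simp
  ring

lemma phi_small {n : ℕ} (hn : 5 ≤ n) {t : ℝ} (ht : 0 < t) (ht1 : t ≤ (((n:ℝ) ^ 2)⁻¹)) :
    phi n t < 0 := by
  have hn5 : (5:ℝ) ≤ (n:ℝ) := by exact_mod_cast hn
  have hnpos : (0:ℝ) < (n:ℝ) := by linarith
  have htle1 : t ≤ 1 := by
    calc t ≤ ((n:ℝ) ^ 2)⁻¹ := ht1
    _ ≤ 1 := by rw [inv_le_one_iff₀]; right; nlinarith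
  have hA := Av_pos (n := n) ht
  have hA1 : Av n t ≤ 1 := by
    rw [Av_eq ht]
    exact Real.rpow_le_one ht.le htle1 (by positivity)
  have h1 : Av n t ≤ t ^ ((5:ℝ)/2) := by
    rw [Av_eq ht]
    exact Real.rpow_le_rpow_of_exponent_ge ht htle1 (by linarith)
  have h2 : t ^ ((5:ℝ)/2) = t ^ 2 * t ^ ((1:ℝ)/2) := by
    rw [show (5:ℝ)/2 = ((2:ℕ):ℝ) + (1:ℝ)/2 by norm_num, Real.rpow_add ht, Real.rpow_natCast]
  have h3 : t ^ ((1:ℝ)/2) ≤ (((n:ℝ) ^ 2)⁻¹) ^ ((1:ℝ)/2) :=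
    Real.rpow_le_rpow ht.le ht1 (by norm_num)
  have h4 : (((n:ℝ) ^ 2)⁻¹) ^ ((1:ℝ)/2) = (n:ℝ)⁻¹ := by
    rw [← inv_pow, ← Real.rpow_natCast ((n:ℝ)⁻¹) 2, ← Real.rpow_mul (by positivity)]
    norm_num
  have h5 : (n:ℝ) * Av n t ≤ t ^ 2 := by
    calc (n:ℝ) * Av n t ≤ (n:ℝ) * (t ^ 2 * ((n:ℝ)⁻¹)) := by
          apply mul_le_mul_of_nonneg_left _ hnpos.le
          rw [← h4]
          calc Av n t ≤ t ^ ((5:ℝ)/2) := h1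
          _ = t ^ 2 * t ^ ((1:ℝ)/2) := h2
          _ ≤ t ^ 2 * (((n:ℝ) ^ 2)⁻¹) ^ ((1:ℝ)/2) := by
              exact mul_le_mul_of_nonneg_left h3 (by positivity)
    _ = t ^ 2 := by field_simp
  rw [phi]
  nlinarith [mul_pos ht (mul_pos ht hA), mul_pos hA hA]

lemma continuous_phi (n : ℕ) : Continuous (phi n) := by
  have hA : Continuous (Av n) := by
    apply Continuous.rpow_const (continuous_pow n)
    intro x; right; norm_num
  unfold phi
  fun_prop

lemma phi_neg {n : ℕ} (hn : 5 ≤ n) {r₀ : ℝ}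
    (hr₀ : 0 < r₀ ∧ r₀ < 1 ∧ fchar n r₀ 0 = 0 ∧
      ∀ r : ℝ, 0 < r → r < 1 → fchar n r 0 = 0 → r = r₀)
    {t : ℝ} (ht : 0 < t) (htr : t < r₀) : phi n t < 0 := by
  by_contra hcon
  push_neg at hcon
  set t₁ := min t (((n:ℝ) ^ 2)⁻¹) with ht₁def
  have hnpos : (0:ℝ) < (n:ℝ) := by
    have : (5:ℝ) ≤ (n:ℝ) := by exact_mod_cast hn
    linarith
  have ht₁pos : 0 < t₁ := lt_min ht (by positivity)
  have ht₁le : t₁ ≤ t := min_le_left _ _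
  have hsmall : phi n t₁ < 0 := phi_small hn ht₁pos (min_le_right _ _)
  have hIVT := intermediate_value_Icc ht₁le (continuous_phi n).continuousOn
  have h0mem : (0:ℝ) ∈ Set.Icc (phi n t₁) (phi n t) := ⟨hsmall.le, hcon⟩
  obtain ⟨s, hsmem, hs0⟩ := hIVT h0mem
  have hspos : 0 < s := lt_of_lt_of_le ht₁pos hsmem.1
  have hslt : s < r₀ := lt_of_le_of_lt hsmem.2 htr
  have hfs : fchar n s 0 = 0 := by
    have := fchar_factor (n := n) hspos
    rw [hs0, zero_mul] at this
    have hs4 : (s:ℝ) ^ 4 ≠ 0 := by positivity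
    exact (mul_eq_zero.mp this).resolve_right hs4
  have heq := hr₀.2.2.2 s hspos (lt_trans hslt hr₀.2.1) hfs
  rw [heq] at hslt
  exact lt_irrefl _ hslt

lemma gr_in_A {n : ℕ} {t : ℝ} (ht : 0 < t) :
    gr n t = t * ((Av n t)⁻¹ + ((n:ℝ) - 1)) / (Av n t + ((n:ℝ) - 1)) := rfl

lemma key_lt {n : ℕ} (hn : 5 ≤ n) {r₀ : ℝ}
    (hr₀ : 0 < r₀ ∧ r₀ < 1 ∧ fchar n r₀ 0 = 0 ∧
      ∀ r : ℝ, 0 < r → r < 1 → fchar n r 0 = 0 → r = r₀)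
    {t : ℝ} (ht : 0 < t) (htr : t < r₀) : t⁻¹ < gr n t := by
  have hφ := phi_neg hn hr₀ ht htr
  rw [phi] at hφ
  have hA := Av_pos (n := n) ht
  have hc : (4:ℝ) ≤ (n:ℝ) - 1 := by
    have : (5:ℝ) ≤ (n:ℝ) := by exact_mod_cast hn
    linarith
  have hd : 0 < Av n t + ((n:ℝ) - 1) := by positivity
  rw [gr_in_A ht, lt_div_iff₀ hd]
  have hAinv : Av n t * (Av n t)⁻¹ = 1 := mul_inv_cancel₀ hA.ne'
  have htinv : t * t⁻¹ = 1 := mul_inv_cancel₀ ht.ne'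
  have key : t⁻¹ * (Av n t + ((n:ℝ) - 1)) * (t * Av n t)
      < t * ((Av n t)⁻¹ + ((n:ℝ) - 1)) * (t * Av n t) := by
    have e1 : t⁻¹ * (Av n t + ((n:ℝ) - 1)) * (t * Av n t)
        = (t * t⁻¹) * (Av n t * (Av n t + ((n:ℝ) - 1))) := by ring
    have e2 : t * ((Av n t)⁻¹ + ((n:ℝ) - 1)) * (t * Av n t)
        = t ^ 2 * ((Av n t * (Av n t)⁻¹) + ((n:ℝ) - 1) * Av n t) := by ring
    rw [e1, e2, htinv, hAinv]
    nlinarith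
  exact lt_of_mul_lt_mul_right key (by positivity)

lemma fixed_point_fchar {n : ℕ} (hn : 5 ≤ n) {t : ℝ} (ht : 0 < t)
    (hfix : gr n t = t⁻¹) : fchar n t 0 = 0 := by
  have hA := Av_pos (n := n) ht
  have hc : (4:ℝ) ≤ (n:ℝ) - 1 := by
    have : (5:ℝ) ≤ (n:ℝ) := by exact_mod_cast hn
    linarith
  have hd : (Av n t + ((n:ℝ) - 1)) ≠ 0 := by positivity
  rw [gr_in_A ht, div_eq_iff hd] at hfix
  have hφ : phi n t = 0 := by
    rw [phi]
    have := congrArg (fun x => x * (t * Av n t)) hfix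
    have hAinv : Av n t * (Av n t)⁻¹ = 1 := mul_inv_cancel₀ hA.ne'
    have htinv : t * t⁻¹ = 1 := mul_inv_cancel₀ ht.ne'
    linear_combination (-1 : ℝ) * this
      + (-(Av n t * (Av n t + ((n:ℝ) - 1)))) * htinv + t ^ 2 * hAinv
  have hff := fchar_factor (n := n) ht
  rw [hφ, zero_mul] at hff
  have ht4 : (t:ℝ) ^ 4 ≠ 0 := by positivity
  exact (mul_eq_zero.mp hff).resolve_right ht4

lemma continuousAt_gr {n : ℕ} (hn : 5 ≤ n) {t : ℝ} (ht : 0 < t) :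
    ContinuousAt (gr n) t := by
  have hA := Av_pos (n := n) ht
  have hc : (4:ℝ) ≤ (n:ℝ) - 1 := by
    have : (5:ℝ) ≤ (n:ℝ) := by exact_mod_cast hn
    linarith
  have hAc : ContinuousAt (Av n) t := by
    apply ContinuousAt.rpow_const (continuous_pow n).continuousAt
    right; norm_num
  have hd : Av n t + ((n:ℝ) - 1) ≠ 0 := by positivity
  have : ContinuousAt (fun s => s * ((Av n s)⁻¹ + ((n:ℝ) - 1)) / (Av n s + ((n:ℝ) - 1))) t := by
    apply ContinuousAt.div
    · exact continuousAt_id.mul ((hAc.inv₀ hA.ne').add continuousAt_const)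
    · exact hAc.add continuousAt_const
    · exact hd
  exact this

lemma h_step {n : ℕ} (hn : 5 ≤ n) {r₀ : ℝ}
    (hr₀ : 0 < r₀ ∧ r₀ < 1 ∧ fchar n r₀ 0 = 0 ∧
      ∀ r : ℝ, 0 < r → r < 1 → fchar n r 0 = 0 → r = r₀)
    {t : ℝ} (ht : 0 < t) (htr : t < r₀) :
    0 < (gr n t)⁻¹ ∧ (gr n t)⁻¹ < t := by
  have hg := gr_pos hn ht
  have hkey := key_lt hn hr₀ ht htr
  refine ⟨inv_pos.mpr hg, ?_⟩
  have h1 : 1 < t * gr n t := by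
    have := mul_lt_mul_of_pos_left hkey ht
    rwa [mul_inv_cancel₀ ht.ne'] at this
  nlinarith [mul_inv_cancel₀ hg.ne']

lemma tendsto_zero {n : ℕ} (hn : 5 ≤ n) {r₀ : ℝ}
    (hr₀ : 0 < r₀ ∧ r₀ < 1 ∧ fchar n r₀ 0 = 0 ∧
      ∀ r : ℝ, 0 < r → r < 1 → fchar n r 0 = 0 → r = r₀)
    {r : ℝ} (hr : 0 < r) (hrr : r < r₀) :
    Tendsto (fun k : ℕ => (fun t => (gr n t)⁻¹)^[k] r) atTop (nhds 0) := by
  set H : ℝ → ℝ := fun t => (gr n t)⁻¹ with hH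
  set a : ℕ → ℝ := fun k => H^[k] r with ha
  have hinv : ∀ k, 0 < a k ∧ a k < r₀ := by
    intro k
    induction k with
    | zero => exact ⟨hr, hrr⟩
    | succ k ih =>
      have hstep := h_step hn hr₀ ih.1 ih.2
      have : a (k+1) = H (a k) := by
        simp only [ha, Function.iterate_succ_apply']
      rw [this]
      exact ⟨hstep.1, lt_trans hstep.2 ih.2⟩
  have hsucc : ∀ k, a (k+1) < a k := by
    intro k
    have hstep := h_step hn hr₀ (hinv k).1 (hinv k).2
    have : a (k+1) = H (a k) := by
      simp only [ha, Function.iterate_succ_apply']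
    rw [this]; exact hstep.2
  have hanti : Antitone a := antitone_nat_of_succ_le fun k => (hsucc k).le
  rcases tendsto_of_antitone hanti with hbot | ⟨L, hL⟩
  · exfalso
    obtain ⟨k, hk⟩ := (hbot.eventually (eventually_le_atBot (-1))).exists
    linarith [(hinv k).1]
  · have hL0 : 0 ≤ L := ge_of_tendsto hL (Eventually.of_forall fun k => (hinv k).1.le)
    rcases eq_or_lt_of_le hL0 with hL0' | hLpos
    · rwa [← hL0'] at hL
    exfalso
    have hcont : ContinuousAt H L := (continuousAt_gr hn hLpos).inv₀ (gr_pos hn hLpos).ne'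
    have h1 : Tendsto (fun k => a (k+1)) atTop (nhds L) :=
      hL.comp (tendsto_add_atTop_nat 1)
    have h2 : Tendsto (fun k => H (a k)) atTop (nhds (H L)) := hcont.tendsto.comp hL
    have heq : (fun k => H (a k)) = fun k => a (k+1) := by
      funext k
      simp only [ha, Function.iterate_succ_apply']
    rw [heq] at h2
    have hfix : H L = L := tendsto_nhds_unique h2 h1
    have hgrL : gr n L = L⁻¹ := by
      rw [← inv_inv (gr n L), hH] at *
      exact congrArg Inv.inv hfix
    have hLlt : L < r₀ := by
      have hLle : L ≤ a 1 := le_of_tendsto hL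
        (by filter_upwards [eventually_ge_atTop 1] with k hk; exact hanti hk)
      calc L ≤ a 1 := hLle
      _ < a 0 := hsucc 0
      _ < r₀ := by simpa [ha] using hrr
    have hfc := fixed_point_fchar hn hLpos hgrL
    have := hr₀.2.2.2 L hLpos (lt_trans hLlt hr₀.2.1) hfc
    rw [this] at hLlt
    exact lt_irrefl _ hLlt

lemma Lp_real {n : ℕ} {t : ℝ} (ht : 0 < t) : Lp n (t : ℂ) = ((gr n t : ℝ) : ℂ) := by
  have h1 : ((t : ℂ)) ^ n = ((t ^ n : ℝ) : ℂ) := by push_cast; ring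
  have h2 : ((t ^ n : ℝ) : ℂ) ^ ((1 : ℂ) / 2) = (((t ^ n) ^ ((1:ℝ)/2) : ℝ) : ℂ) := by
    rw [show ((1:ℂ)/2) = (((1:ℝ)/2 : ℝ) : ℂ) by norm_num,
      ← Complex.ofReal_cpow (pow_nonneg ht.le n)]
  rw [Lp, gr, h1, h2]
  push_cast
  ring

lemma gr_iter_pos {n : ℕ} (hn : 5 ≤ n) {t : ℝ} (ht : 0 < t) (k : ℕ) :
    0 < (gr n)^[k] t := by
  induction k with
  | zero => exact ht
  | succ k ih => rw [Function.iterate_succ_apply']; exact gr_pos hn ih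

lemma Lp_iter_real {n : ℕ} (hn : 5 ≤ n) {t : ℝ} (ht : 0 < t) (k : ℕ) :
    (Lp n)^[k] (t : ℂ) = (((gr n)^[k] t : ℝ) : ℂ) := by
  induction k with
  | zero => rfl
  | succ k ih =>
    rw [Function.iterate_succ_apply', Function.iterate_succ_apply', ih,
      Lp_real (gr_iter_pos hn ht k)]

lemma gr_iter_inv {n : ℕ} (hn : 5 ≤ n) {t : ℝ} (ht : 0 < t) (k : ℕ) :
    (gr n)^[k] t⁻¹ = ((gr n)^[k] t)⁻¹ := by
  induction k with
  | zero => rfl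
  | succ k ih =>
    rw [Function.iterate_succ_apply', Function.iterate_succ_apply', ih,
      gr_inv hn (gr_iter_pos hn ht k)]

lemma gr_even {n : ℕ} (hn : 5 ≤ n) {t : ℝ} (ht : 0 < t) (k : ℕ) :
    (gr n)^[2 * k] t = (fun s => (gr n s)⁻¹)^[2 * k] t := by
  induction k generalizing t ht with
  | zero => rfl
  | succ k ih =>
    have h2 : (gr n)^[2] t = (fun s => (gr n s)⁻¹)^[2] t := by
      show gr n (gr n t) = ((gr n (gr n t)⁻¹))⁻¹
      rw [gr_inv hn (gr_pos hn ht), inv_inv]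
    rw [show 2 * (k + 1) = 2 * k + 2 by ring, Function.iterate_add_apply,
      Function.iterate_add_apply, ← h2]
    exact ih (gr_iter_pos hn ht 2)

lemma H_iter_mem {n : ℕ} (hn : 5 ≤ n) {r₀ : ℝ}
    (hr₀ : 0 < r₀ ∧ r₀ < 1 ∧ fchar n r₀ 0 = 0 ∧
      ∀ r : ℝ, 0 < r → r < 1 → fchar n r 0 = 0 → r = r₀)
    {r : ℝ} (hr : 0 < r) (hrr : r < r₀) (k : ℕ) :
    0 < (fun t => (gr n t)⁻¹)^[k] r ∧ (fun t => (gr n t)⁻¹)^[k] r < r₀ := by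
  induction k with
  | zero => exact ⟨hr, hrr⟩
  | succ k ih =>
    have hstep := h_step hn hr₀ ih.1 ih.2
    rw [Function.iterate_succ_apply']
    exact ⟨hstep.1, lt_trans hstep.2 ih.2⟩

theorem stmt18 (n : ℕ) (hn : 5 ≤ n) (r₀ : ℝ)
    (hr₀ : 0 < r₀ ∧ r₀ < 1 ∧ fchar n r₀ 0 = 0 ∧
      ∀ r : ℝ, 0 < r → r < 1 → fchar n r 0 = 0 → r = r₀)
    (r : ℝ) (hr : 0 < r) :
    (r < r₀ →
      Filter.Tendsto (fun k : ℕ => (Lp n)^[2 * k] (r : ℂ)) Filter.atTop (nhds 0) ∧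
      Filter.Tendsto (fun k : ℕ => ‖(Lp n)^[2 * k + 1] (r : ℂ)‖) Filter.atTop Filter.atTop) ∧
    (1 / r₀ < r →
      Filter.Tendsto (fun k : ℕ => ‖(Lp n)^[2 * k] (r : ℂ)‖) Filter.atTop Filter.atTop ∧
      Filter.Tendsto (fun k : ℕ => (Lp n)^[2 * k + 1] (r : ℂ)) Filter.atTop (nhds 0)) := by
  have h2k : Tendsto (fun k : ℕ => 2 * k) atTop atTop :=
    tendsto_atTop_mono (fun k => by simp only [id_eq]; omega) tendsto_id
  constructor
  · intro hrr
    set H : ℝ → ℝ := fun t => (gr n t)⁻¹ with hH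
    have hb : Tendsto (fun k : ℕ => H^[2 * k] r) atTop (nhds 0) :=
      (tendsto_zero hn hr₀ hr hrr).comp h2k
    have hmem : ∀ k : ℕ, 0 < H^[2 * k] r ∧ H^[2 * k] r < r₀ :=
      fun k => H_iter_mem hn hr₀ hr hrr (2 * k)
    have heqE : ∀ k : ℕ, (Lp n)^[2 * k] (r : ℂ) = ((H^[2 * k] r : ℝ) : ℂ) := fun k => by
      rw [Lp_iter_real hn hr (2 * k), gr_even hn hr k]
    have heqO : ∀ k : ℕ, (Lp n)^[2 * k + 1] (r : ℂ) = ((gr n (H^[2 * k] r) : ℝ) : ℂ) := fun k => by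
      rw [Lp_iter_real hn hr (2 * k + 1), Function.iterate_succ_apply', gr_even hn hr k]
    have hbinv : Tendsto (fun k : ℕ => (H^[2 * k] r)⁻¹) atTop atTop := by
      apply Tendsto.inv_tendsto_nhdsGT_zero
      exact tendsto_nhdsWithin_of_tendsto_nhds_of_eventually_within _ hb
        (Eventually.of_forall fun k => (hmem k).1)
    constructor
    · have : Tendsto (fun k : ℕ => ((H^[2 * k] r : ℝ) : ℂ)) atTop (nhds ((0:ℝ):ℂ)) :=
        (Complex.continuous_ofReal.tendsto 0).comp hb
      rw [Complex.ofReal_zero] at this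
      exact this.congr fun k => (heqE k).symm
    · apply tendsto_atTop_mono _ hbinv
      intro k
      rw [heqO k, Complex.norm_real, Real.norm_eq_abs,
        abs_of_pos (gr_pos hn (hmem k).1)]
      exact (key_lt hn hr₀ (hmem k).1 (hmem k).2).le
  · intro hrr
    have hrinv : r⁻¹ < r₀ := by
      rw [one_div] at hrr
      have h1 : r⁻¹ < (r₀⁻¹)⁻¹ := by
        apply inv_strictAnti₀ (inv_pos.mpr hr₀.1) hrr
      rwa [inv_inv] at h1
    have hs : (0:ℝ) < r⁻¹ := inv_pos.mpr hr
    set H : ℝ → ℝ := fun t => (gr n t)⁻¹ with hH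
    have hb : Tendsto (fun k : ℕ => H^[2 * k] r⁻¹) atTop (nhds 0) :=
      (tendsto_zero hn hr₀ hs hrinv).comp h2k
    have hmem : ∀ k : ℕ, 0 < H^[2 * k] r⁻¹ ∧ H^[2 * k] r⁻¹ < r₀ :=
      fun k => H_iter_mem hn hr₀ hs hrinv (2 * k)
    have hbinv : Tendsto (fun k : ℕ => (H^[2 * k] r⁻¹)⁻¹) atTop atTop := by
      apply Tendsto.inv_tendsto_nhdsGT_zero
      exact tendsto_nhdsWithin_of_tendsto_nhds_of_eventually_within _ hb
        (Eventually.of_forall fun k => (hmem k).1)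
    have hiterinv : ∀ m : ℕ, (gr n)^[m] r = ((gr n)^[m] r⁻¹)⁻¹ := by
      intro m
      rw [← gr_iter_inv hn hs m, inv_inv]
    have heqE : ∀ k : ℕ, (Lp n)^[2 * k] (r : ℂ) = (((H^[2 * k] r⁻¹)⁻¹ : ℝ) : ℂ) := fun k => by
      rw [Lp_iter_real hn hr (2 * k), hiterinv (2 * k), gr_even hn hs k]
    have heqO : ∀ k : ℕ, (Lp n)^[2 * k + 1] (r : ℂ) = (((gr n (H^[2 * k] r⁻¹))⁻¹ : ℝ) : ℂ) := fun k => by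
      rw [Lp_iter_real hn hr (2 * k + 1), hiterinv (2 * k + 1),
        Function.iterate_succ_apply', gr_even hn hs k]
    have hgb : Tendsto (fun k : ℕ => gr n (H^[2 * k] r⁻¹)) atTop atTop := by
      apply tendsto_atTop_mono _ hbinv
      exact fun k => (key_lt hn hr₀ (hmem k).1 (hmem k).2).le
    constructor
    · apply tendsto_atTop_mono _ hbinv
      intro k
      rw [heqE k, Complex.norm_real, Real.norm_eq_abs, abs_of_pos (inv_pos.mpr (hmem k).1)]
    · have h0 : Tendsto (fun k : ℕ => (gr n (H^[2 * k] r⁻¹))⁻¹) atTop (nhds 0) :=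
        hgb.inv_tendsto_atTop
      have : Tendsto (fun k : ℕ => (((gr n (H^[2 * k] r⁻¹))⁻¹ : ℝ) : ℂ)) atTop (nhds ((0:ℝ):ℂ)) :=
        (Complex.continuous_ofReal.tendsto 0).comp h0
      rw [Complex.ofReal_zero] at this
      exact this.congr fun k => (heqO k).symm
end
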